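/- Let W be a standard one-dimensional Brownian motion, and for r > 0 define τ_r⁺ := inf{ s ≥ 0 : W(s) − inf_{0≤u≤s} W(u) = r } and β_r⁺ := inf{ s ≥ 0 : W(s) = inf_{0≤u≤τ_r⁺} W(u) }. Then with probability one, β_r⁺ > r²/(log r)⁴ for all sufficiently large r. -/

import Mathlib

open MeasureTheory ProbabilityTheory Set
open scoped NNReal ENNReal

noncomputable section

/-- `B` is a standard one-dimensional Brownian motion started at `0` under the
probability measure `P` (only its behavior at nonnegative times is constrained):
it starts at `0`, has continuous paths, and has independent increments with
`B t - B s` Gaussian of mean `0` and variance `t - s` for `0 ≤ s ≤ t`. -/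
structure IsBrownianMotion {Ω : Type*} [MeasurableSpace Ω] (P : Measure Ω)
    (B : ℝ → Ω → ℝ) : Prop where
  isProb : IsProbabilityMeasure P
  init : ∀ ω, B 0 ω = 0
  cont : ∀ ω, Continuous fun t => B t ω
  meas : ∀ t, Measurable (B t)
  gauss : ∀ s t : ℝ, 0 ≤ s → s ≤ t →
    Measure.map (fun ω => B t ω - B s ω) P = gaussianReal 0 (t - s).toNNReal
  indep : ∀ (n : ℕ) (ts : Fin (n + 1) → ℝ), (∀ i, 0 ≤ ts i) → Monotone ts →
    iIndepFun
      (fun (i : Fin n) (ω : Ω) => B (ts i.succ) ω - B (ts i.castSucc) ω) P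

/-- The restriction of a process to nonnegative times, as a path-valued map. -/
def nnPath {Ω : Type*} (W : ℝ → Ω → ℝ) (ω : Ω) : {t : ℝ // 0 ≤ t} → ℝ :=
  fun t => W t.1 ω

/-- `W` is a two-sided standard Brownian motion under `P`: `(W t)_{t ≥ 0}` and
`(W (-t))_{t ≥ 0}` are independent standard Brownian motions started at `0`. -/
structure IsTwoSidedBM {Ω : Type*} [MeasurableSpace Ω] (P : Measure Ω)
    (W : ℝ → Ω → ℝ) : Prop where
  pos : IsBrownianMotion P fun t ω => W t ω
  neg : IsBrownianMotion P fun t ω => W (-t) ω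
  indep : IndepFun (nnPath W) (nnPath fun t ω => W (-t) ω) P

/-- `f` admits an `x`-minimum at `y₀`. -/
def xMinimumAt (f : ℝ → ℝ) (x y₀ : ℝ) : Prop :=
  ∃ a b : ℝ, a < y₀ ∧ y₀ < b ∧ (∀ y ∈ Icc a b, f y₀ ≤ f y) ∧
    f y₀ + x ≤ f a ∧ f y₀ + x ≤ f b

/-- `f` admits an `x`-maximum at `y₀`. -/
def xMaximumAt (f : ℝ → ℝ) (x y₀ : ℝ) : Prop :=
  xMinimumAt (fun t => -f t) x y₀

/-- `y₀` is an `x`-extremum of `f`. -/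
def xExtremumAt (f : ℝ → ℝ) (x y₀ : ℝ) : Prop :=
  xMinimumAt f x y₀ ∨ xMaximumAt f x y₀

/-- `x₁(f, x)`: the smallest positive `x`-extremum of `f`. -/
def xOnePt (f : ℝ → ℝ) (x : ℝ) : ℝ :=
  sInf {y : ℝ | 0 < y ∧ xExtremumAt f x y}

/-- `x₀(f, x)`: the largest nonpositive `x`-extremum of `f`. -/
def xZeroPt (f : ℝ → ℝ) (x : ℝ) : ℝ :=
  sSup {y : ℝ | y ≤ 0 ∧ xExtremumAt f x y}

attribute [local instance] Classical.propDecidable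

/-- `b_x(f)`: that one of `x₀(f,x)`, `x₁(f,x)` which is an `x`-minimum of `f`. -/
def bProc (f : ℝ → ℝ) (x : ℝ) : ℝ :=
  if xMinimumAt f x (xOnePt f x) then xOnePt f x else xZeroPt f x

/-- `g` jumps at `x`: `g` is not locally constant at `x`. -/
def jumpsAt (g : ℝ → ℝ) (x : ℝ) : Prop :=
  ¬ ∃ ε > 0, ∀ y ∈ Ioo (x - ε) (x + ε), g y = g x

/-- `W^#(x, y)`: the maximal ascent of `f` encountered travelling from `x` to `y`. -/
def sharp (f : ℝ → ℝ) (x y : ℝ) : ℝ :=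
  if x ≤ y then sSup {d : ℝ | ∃ u v : ℝ, x ≤ u ∧ u ≤ v ∧ v ≤ y ∧ d = f v - f u}
  else sSup {d : ℝ | ∃ u v : ℝ, y ≤ v ∧ v ≤ u ∧ u ≤ x ∧ d = f v - f u}

/-- The running infimum `inf_{0 ≤ u ≤ t} W u ω`. -/
def runInf {Ω : Type*} (W : ℝ → Ω → ℝ) (ω : Ω) (t : ℝ) : ℝ :=
  sInf ((fun u => W u ω) '' Icc 0 t)

/-- The running supremum `sup_{0 ≤ u ≤ t} W u ω`. -/
def runSup {Ω : Type*} (W : ℝ → Ω → ℝ) (ω : Ω) (t : ℝ) : ℝ :=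
  sSup ((fun u => W u ω) '' Icc 0 t)

/-- `τ_r⁺`: the first time the process rises `r` above its running minimum. -/
def tauPlus {Ω : Type*} (W : ℝ → Ω → ℝ) (r : ℝ) (ω : Ω) : ℝ :=
  sInf {s : ℝ | 0 ≤ s ∧ W s ω - runInf W ω s = r}

/-- `β_r⁺`: the first time the process attains the minimum value it reaches
before time `τ_r⁺`. -/
def betaPlus {Ω : Type*} (W : ℝ → Ω → ℝ) (r : ℝ) (ω : Ω) : ℝ :=
  sInf {s : ℝ | 0 ≤ s ∧ W s ω = runInf W ω (tauPlus W r ω)}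

namespace BMaux
open Real

lemma gauss_neg (v : ℝ≥0) :
    (gaussianReal 0 v).map (fun x => -x) = gaussianReal 0 v := by
  have h := gaussianReal_map_const_mul (μ := 0) (v := v) (-1)
  have h1 : ((-1 : ℝ) * ·) = (fun x : ℝ => -x) := by funext x; ring
  have h2 : (⟨(-1:ℝ)^2, sq_nonneg _⟩ : ℝ≥0) = 1 := by ext; norm_num
  rw [h1] at h
  convert h using 2
  · simp
  · ext; simp

lemma gauss_Iic_eq_Ici (v : ℝ≥0) (a : ℝ) :
    gaussianReal 0 v (Iic a) = gaussianReal 0 v (Ici (-a)) := by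
  conv_lhs => rw [← gauss_neg v]
  rw [Measure.map_apply measurable_neg measurableSet_Iic]
  congr 1
  ext x
  simp [neg_le]

lemma gauss_half {v : ℝ≥0} (hv : v ≠ 0) : gaussianReal 0 v (Ici 0) = 1/2 := by
  set μ := gaussianReal 0 v
  have h0 : μ {(0:ℝ)} = 0 :=
    gaussianReal_absolutelyContinuous 0 hv (measure_singleton 0)
  have hIic : μ (Iic 0) = μ (Ici 0) := by
    have := gauss_Iic_eq_Ici v 0; simpa using this
  have hsum : μ (Ici 0) + μ (Iic 0) = 1 + μ {(0:ℝ)} := by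
    have := measure_union_add_inter (μ := μ) (s := Ici (0:ℝ)) (t := Iic 0) measurableSet_Iic
    have hu : Ici (0:ℝ) ∪ Iic 0 = univ := by ext x; simp [le_total 0 x]
    have hi : Ici (0:ℝ) ∩ Iic 0 = {0} := by ext x; simp [le_antisymm_iff, and_comm]
    rw [hu, hi] at this
    rw [← this, measure_univ]
  rw [hIic, h0, add_zero] at hsum
  have h2 : (2:ℝ≥0∞) * μ (Ici 0) = 1 := by rw [two_mul]; exact hsum
  calc μ (Ici 0) = 2⁻¹ * (2 * μ (Ici 0)) := by
        rw [← mul_assoc, ENNReal.inv_mul_cancel (by norm_num) (by norm_num), one_mul]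
    _ = 1/2 := by rw [h2, mul_one, one_div]

lemma exp_half_le : (1/2 : ℝ) ≤ Real.exp (-(1/2 : ℝ)) := by
  rw [Real.exp_neg, le_inv_comm₀ (by norm_num) (Real.exp_pos _)]
  have h1 : Real.exp (1/2 : ℝ) ^ 2 = Real.exp 1 := by
    rw [← Real.exp_nat_mul]; norm_num
  nlinarith [Real.exp_pos (1/2 : ℝ), Real.exp_one_lt_d9, Real.exp_pos (1:ℝ)]

lemma gauss_tail (v : ℝ≥0) {c : ℝ} (hc : 0 ≤ c) :
    gaussianReal 0 v (Ici c) ≤ ENNReal.ofReal (Real.exp (-c^2 / (2*(v:ℝ)))) := by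
  by_cases hv : v = 0
  · subst hv
    simp only [NNReal.coe_zero, mul_zero, div_zero, Real.exp_zero, ENNReal.ofReal_one]
    exact prob_le_one
  have hvpos : (0:ℝ) < v := lt_of_le_of_ne v.coe_nonneg (by exact_mod_cast (Ne.symm hv))
  have hofhalf : (ENNReal.ofReal (1/2) : ℝ≥0∞) = 1/2 := by
    rw [ENNReal.ofReal_div_of_pos (by norm_num)]; norm_num
  by_cases hcv : c^2 ≤ (v:ℝ)
  · have h1 : gaussianReal 0 v (Ici c) ≤ 1/2 := by
      rw [← gauss_half hv]
      exact measure_mono (Ici_subset_Ici.mpr hc)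
    refine h1.trans ?_
    have h2 : (1/2 : ℝ) ≤ Real.exp (-c^2 / (2*(v:ℝ))) := by
      have h3 : -(1/2 : ℝ) ≤ -c^2 / (2*(v:ℝ)) := by
        rw [neg_div, neg_le_neg_iff, div_le_iff₀ (by linarith)]
        nlinarith
      calc (1/2:ℝ) ≤ Real.exp (-(1/2:ℝ)) := exp_half_le
        _ ≤ _ := Real.exp_le_exp.mpr h3
    rw [← hofhalf]
    exact ENNReal.ofReal_le_ofReal h2
  · push_neg at hcv
    have hcpos : 0 < c := by nlinarith
    have hb : 0 < c / (v:ℝ) := div_pos hcpos hvpos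
    rw [gaussianReal_apply_eq_integral 0 hv]
    have hsq : (0:ℝ) < 2 * π * v := by positivity
    set K : ℝ := (Real.sqrt (2 * π * v))⁻¹ with hK
    have hKpos : 0 < K := by positivity
    have h2v : (0:ℝ) < 2 * v := by linarith
    have hgint : IntegrableOn (fun x : ℝ => K * Real.exp (c^2/(2*(v:ℝ))) * Real.exp (-(c/(v:ℝ)) * x)) (Ici c) := by
      rw [integrableOn_Ici_iff_integrableOn_Ioi]
      exact (exp_neg_integrableOn_Ioi c hb).const_mul _
    have hmono : ∫ x in Ici c, gaussianPDFReal 0 v x ≤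
        ∫ x in Ici c, K * Real.exp (c^2/(2*(v:ℝ))) * Real.exp (-(c/(v:ℝ)) * x) := by
      refine setIntegral_mono_on (integrable_gaussianPDFReal 0 v).integrableOn hgint
        measurableSet_Ici ?_
      intro x hx
      rw [mem_Ici] at hx
      rw [gaussianPDFReal, ← hK, mul_assoc, ← Real.exp_add]
      refine mul_le_mul_of_nonneg_left (Real.exp_le_exp.mpr ?_) hKpos.le
      have hrhs : c^2/(2*(v:ℝ)) + (-(c/(v:ℝ)) * x) = (c^2 - 2*c*x)/(2*(v:ℝ)) := by
        field_simp; ring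
      rw [hrhs, sub_zero, div_le_div_iff_of_pos_right h2v]
      nlinarith [sq_nonneg (x - c)]
    have h2 : ∫ x in Ioi c, Real.exp (-(c/(v:ℝ)) * x)
        = (v:ℝ)/c * Real.exp (-(c/(v:ℝ)) * c) := by
      have h3 := integral_comp_mul_left_Ioi (fun y => Real.exp (-y)) c hb
      simp only [neg_mul] at h3 ⊢
      rw [h3, integral_exp_neg_Ioi, smul_eq_mul, inv_div]
    have hcalc : ∫ x in Ici c, K * Real.exp (c^2/(2*(v:ℝ))) * Real.exp (-(c/(v:ℝ)) * x)
        = K * ((v:ℝ)/c) * Real.exp (-c^2 / (2*(v:ℝ))) := by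
      rw [integral_Ici_eq_integral_Ioi, integral_const_mul, h2]
      have hAB : Real.exp (c^2/(2*(v:ℝ))) * Real.exp (-(c/(v:ℝ)) * c)
          = Real.exp (-c^2/(2*(v:ℝ))) := by
        rw [← Real.exp_add]; congr 1; field_simp; ring
      calc K * rexp (c^2/(2*(v:ℝ))) * ((v:ℝ)/c * rexp (-(c/(v:ℝ)) * c))
          = K * ((v:ℝ)/c) * (rexp (c^2/(2*(v:ℝ))) * rexp (-(c/(v:ℝ)) * c)) := by ring
        _ = _ := by rw [hAB]
    refine (ENNReal.ofReal_le_ofReal (hmono.trans_eq hcalc)).trans ?_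
    refine ENNReal.ofReal_le_ofReal ?_
    have hKv : K * ((v:ℝ)/c) ≤ 1 := by
      have hsv : Real.sqrt v ≤ Real.sqrt (2*π*v) := by
        apply Real.sqrt_le_sqrt; nlinarith [Real.pi_gt_three]
      have hcs : Real.sqrt v < c := by
        have h5 := Real.sqrt_lt_sqrt v.coe_nonneg hcv
        rwa [Real.sqrt_sq hcpos.le] at h5
      have hvc : (v:ℝ)/c ≤ Real.sqrt v := by
        rw [div_le_iff₀ hcpos]
        nlinarith [Real.sq_sqrt v.coe_nonneg, Real.sqrt_nonneg (v:ℝ)]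
      rw [hK, inv_mul_le_iff₀ (by positivity), mul_one]
      exact hvc.trans hsv
    nlinarith [Real.exp_pos (-c^2 / (2*(v:ℝ)))]

lemma gauss_Iic_tail (v : ℝ≥0) {c : ℝ} (hc : 0 ≤ c) :
    gaussianReal 0 v (Iic (-c)) ≤ ENNReal.ofReal (Real.exp (-c^2 / (2*(v:ℝ)))) := by
  rw [gauss_Iic_eq_Ici, neg_neg]; exact gauss_tail v hc

lemma gauss_interval {v : ℝ≥0} (hv : v ≠ 0) (a b : ℝ) :
    gaussianReal 0 v (Icc a b) ≤ ENNReal.ofReal ((b - a) * (Real.sqrt (2 * π * (v:ℝ)))⁻¹) := by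
  rcases lt_or_ge b a with hab | hab
  · rw [Icc_eq_empty hab.not_ge]; simp
  have hvpos : (0:ℝ) < v := lt_of_le_of_ne v.coe_nonneg (by exact_mod_cast (Ne.symm hv))
  have hKpos : (0:ℝ) < (Real.sqrt (2 * π * (v:ℝ)))⁻¹ := by positivity
  rw [gaussianReal_apply_eq_integral 0 hv]
  refine ENNReal.ofReal_le_ofReal ?_
  have hconst : IntegrableOn (fun _ : ℝ => (Real.sqrt (2 * π * (v:ℝ)))⁻¹) (Icc a b) := by
    apply (integrableOn_const_iff enorm_ne_top).mpr
    right
    rw [Real.volume_Icc]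
    exact ENNReal.ofReal_lt_top
  have hmono : ∫ x in Icc a b, gaussianPDFReal 0 v x
      ≤ ∫ _x in Icc a b, (Real.sqrt (2 * π * (v:ℝ)))⁻¹ := by
    refine setIntegral_mono_on (integrable_gaussianPDFReal 0 v).integrableOn hconst
      measurableSet_Icc ?_
    intro x _
    rw [gaussianPDFReal]
    have h1 : Real.exp (-(x - 0)^2 / (2 * (v:ℝ))) ≤ 1 := by
      rw [Real.exp_le_one_iff]
      apply div_nonpos_of_nonpos_of_nonneg
      · nlinarith [sq_nonneg (x - 0)]
      · linarith
    exact mul_le_of_le_one_right hKpos.le h1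
  refine hmono.trans ?_
  rw [setIntegral_const, Real.volume_real_Icc_of_le hab, smul_eq_mul]


variable {Ω : Type*} [MeasurableSpace Ω] {P : Measure Ω} {W : ℝ → Ω → ℝ}

lemma telescope (hW : IsBrownianMotion P W) {a : ℕ → ℝ} (ha0 : a 0 = 0) (ω : Ω) :
    ∀ j : ℕ, W (a j) ω = ∑ l ∈ Finset.range j, (W (a (l+1)) ω - W (a l) ω) := by
  intro j
  induction j with
  | zero => simp [ha0, hW.init ω]
  | succ j ih => rw [Finset.sum_range_succ, ← ih]; ring

lemma past_future (hW : IsBrownianMotion P W) {a : ℕ → ℝ} (ha0 : a 0 = 0)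
    (hpos : ∀ j, 0 ≤ a j) (hmono : Monotone a) (i k : ℕ) (hik : i ≤ k) :
    IndepFun (fun ω => (fun j : Fin (i+1) => W (a j) ω))
      (fun ω => W (a k) ω - W (a i) ω) P := by
  classical
  set X : Fin k → Ω → ℝ := fun l ω => W (a ((l:ℕ)+1)) ω - W (a (l:ℕ)) ω with hX
  have hXmeas : ∀ l, Measurable (X l) := fun l => (hW.meas _).sub (hW.meas _)
  have hind : iIndepFun X P := by
    have h := hW.indep k (fun l : Fin (k+1) => a l)
      (fun l => hpos _) (fun l1 l2 h12 => hmono h12)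
    exact h
  set S : Finset (Fin k) := Finset.univ.filter (fun l => (l:ℕ) < i) with hS
  set T : Finset (Fin k) := Finset.univ.filter (fun l => i ≤ (l:ℕ)) with hT
  have hdisj : Disjoint S T := by
    rw [Finset.disjoint_left]
    intro l hl hl'
    rw [hS, Finset.mem_filter] at hl
    rw [hT, Finset.mem_filter] at hl'
    omega
  have base := hind.indepFun_finset S T hdisj hXmeas
  set φ : (S → ℝ) → (Fin (i+1) → ℝ) :=
    fun x j => ∑ l : S, if ((l : Fin k) : ℕ) < (j:ℕ) then x l else 0 with hφdef
  set ψ : (T → ℝ) → ℝ := fun x => ∑ l : T, x l with hψdef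
  have hφ : Measurable φ := by
    apply measurable_pi_lambda
    intro j
    apply Finset.measurable_sum
    intro l _
    by_cases hc : ((l : Fin k) : ℕ) < (j:ℕ)
    · simpa [hc] using measurable_pi_apply l
    · simp [hc]
  have hψ : Measurable ψ := by
    apply Finset.measurable_sum
    intro l _
    exact measurable_pi_apply l
  have h2 := base.comp hφ hψ
  have heqφ : (φ ∘ (fun ω (l : S) => X l ω)) = (fun ω => (fun j : Fin (i+1) => W (a j) ω)) := by
    funext ω j
    show ∑ l : S, (if ((l : Fin k) : ℕ) < (j:ℕ) then X l ω else 0) = W (a j) ω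
    rw [Finset.sum_coe_sort S (fun l => if ((l : Fin k) : ℕ) < (j:ℕ) then X l ω else 0)]
    rw [hS, Finset.sum_filter]
    have hji : (j:ℕ) ≤ i := Nat.lt_succ_iff.mp j.isLt
    have step1 : ∀ l : Fin k,
        (if (l:ℕ) < i then (if (l:ℕ) < (j:ℕ) then X l ω else 0) else 0)
        = (if (l:ℕ) < (j:ℕ) then X l ω else 0) := by
      intro l
      by_cases h1 : (l:ℕ) < (j:ℕ)
      · have : (l:ℕ) < i := lt_of_lt_of_le h1 hji
        simp [h1, this]
      · simp [h1]
    rw [Finset.sum_congr rfl (fun l _ => step1 l)]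
    rw [Fin.sum_univ_eq_sum_range (fun l => if l < (j:ℕ) then W (a (l+1)) ω - W (a l) ω else 0) k]
    rw [← Finset.sum_filter]
    have : (Finset.range k).filter (fun l => l < (j:ℕ)) = Finset.range (j:ℕ) := by
      ext l
      simp only [Finset.mem_filter, Finset.mem_range]
      constructor
      · rintro ⟨_, h⟩; exact h
      · intro h; exact ⟨lt_of_lt_of_le h (hji.trans hik), h⟩
    rw [this, ← telescope hW ha0 ω (j:ℕ)]
  have heqψ : (ψ ∘ (fun ω (l : T) => X l ω)) = (fun ω => W (a k) ω - W (a i) ω) := by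
    funext ω
    show ∑ l : T, X l ω = W (a k) ω - W (a i) ω
    rw [Finset.sum_coe_sort T (fun l => X l ω), hT, Finset.sum_filter]
    rw [Fin.sum_univ_eq_sum_range (fun l => if i ≤ l then W (a (l+1)) ω - W (a l) ω else 0) k]
    rw [← Finset.sum_filter]
    have : (Finset.range k).filter (fun l => i ≤ l) = Finset.Ico i k := by
      ext l
      simp only [Finset.mem_filter, Finset.mem_range, Finset.mem_Ico]
      omega
    rw [this, Finset.sum_Ico_eq_sub _ hik, ← telescope hW ha0 ω k, ← telescope hW ha0 ω i]
  rw [heqφ, heqψ] at h2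
  exact h2

lemma symm_event {α : Type*} [mα : MeasurableSpace α] {V : Ω → α} {Z : Ω → ℝ}
    [IsFiniteMeasure P]
    (hV : Measurable V) (hZ : Measurable Z) (hind : IndepFun V Z P)
    (hsym : Measure.map Z P = Measure.map (fun ω => -Z ω) P)
    {E : Set (α × ℝ)} (hE : MeasurableSet E) :
    P {ω | (V ω, Z ω) ∈ E} = P {ω | (V ω, -Z ω) ∈ E} := by
  have hZneg : Measurable (fun ω => -Z ω) := hZ.neg
  have hind2 : IndepFun V (fun ω => -Z ω) P := hind.comp measurable_id measurable_neg
  have hmap1 := (indepFun_iff_map_prod_eq_prod_map_map hV.aemeasurable hZ.aemeasurable).mp hind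
  have hmap2 := (indepFun_iff_map_prod_eq_prod_map_map hV.aemeasurable
    hZneg.aemeasurable).mp hind2
  have e1 : P {ω | (V ω, Z ω) ∈ E} = Measure.map (fun ω => (V ω, Z ω)) P E := by
    rw [Measure.map_apply (hV.prodMk hZ) hE]; rfl
  have e2 : P {ω | (V ω, -Z ω) ∈ E} = Measure.map (fun ω => (V ω, -Z ω)) P E := by
    rw [Measure.map_apply (hV.prodMk hZneg) hE]; rfl
  rw [e1, e2, hmap1, hmap2, hsym]

/-- The key conditional-reflection identity on a grid. -/
lemma per_i_symm (hW : IsBrownianMotion P W) {a : ℕ → ℝ} (ha0 : a 0 = 0)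
    (hpos : ∀ j, 0 ≤ a j) (hmono : Monotone a) {i k : ℕ} (hik : i ≤ k)
    {C : Set (Fin (i+1) → ℝ)} (hC : MeasurableSet C)
    {D : Set (ℝ × ℝ)} (hD : MeasurableSet D) :
    P {ω | (fun j : Fin (i+1) => W (a j) ω) ∈ C
        ∧ (W (a i) ω, W (a k) ω - W (a i) ω) ∈ D}
    = P {ω | (fun j : Fin (i+1) => W (a j) ω) ∈ C
        ∧ (W (a i) ω, -(W (a k) ω - W (a i) ω)) ∈ D} := by
  haveI := hW.isProb
  set V : Ω → (Fin (i+1) → ℝ) := fun ω => (fun j : Fin (i+1) => W (a j) ω) with hV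
  set Z : Ω → ℝ := fun ω => W (a k) ω - W (a i) ω with hZ
  have hVmeas : Measurable V := measurable_pi_lambda _ (fun j => hW.meas _)
  have hZmeas : Measurable Z := (hW.meas _).sub (hW.meas _)
  have hindVZ : IndepFun V Z P := past_future hW ha0 hpos hmono i k hik
  have hsym : Measure.map Z P = Measure.map (fun ω => -Z ω) P := by
    have hlaw : Measure.map Z P = gaussianReal 0 (a k - a i).toNNReal :=
      hW.gauss (a i) (a k) (hpos i) (hmono hik)
    have hcomp : Measure.map (fun ω => -Z ω) P
        = Measure.map (fun x : ℝ => -x) (Measure.map Z P) :=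
      (Measure.map_map measurable_neg hZmeas).symm
    rw [hcomp, hlaw, gauss_neg]
  set E : Set ((Fin (i+1) → ℝ) × ℝ) :=
    {p | p.1 ∈ C ∧ (p.1 ⟨i, Nat.lt_succ_self i⟩, p.2) ∈ D} with hE
  have hEmeas : MeasurableSet E := by
    apply MeasurableSet.inter
    · exact measurable_fst hC
    · exact (((measurable_pi_apply _).comp measurable_fst).prodMk measurable_snd) hD
  have h := symm_event hVmeas hZmeas hindVZ hsym hEmeas
  have hv : ∀ ω, V ω ⟨i, Nat.lt_succ_self i⟩ = W (a i) ω := fun ω => rfl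
  convert h using 2 <;> rfl

lemma law_W (hW : IsBrownianMotion P W) {u : ℝ} (hu : 0 ≤ u) :
    Measure.map (W u) P = gaussianReal 0 u.toNNReal := by
  have h := hW.gauss 0 u le_rfl hu
  have he : (fun ω => W u ω - W 0 ω) = W u := by
    funext ω; rw [hW.init ω, sub_zero]
  rw [he, sub_zero] at h
  exact h

lemma prob_W_mem (hW : IsBrownianMotion P W) {u : ℝ} (hu : 0 ≤ u) {s : Set ℝ}
    (hs : MeasurableSet s) :
    P {ω | W u ω ∈ s} = gaussianReal 0 u.toNNReal s := by
  rw [← law_W hW hu, Measure.map_apply (hW.meas u) hs]; rfl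

lemma skeleton_le (hW : IsBrownianMotion P W) {u c : ℝ} (hu : 0 < u) (hc : 0 < c)
    {k : ℕ} (hk : 1 ≤ k) :
    P {ω | ∃ j ≤ k, W ((j:ℝ)*u/k) ω ≤ -c} ≤ 2 * P {ω | W u ω ≤ -c} := by
  haveI := hW.isProb
  classical
  set a : ℕ → ℝ := fun j => (j:ℝ)*u/k with ha
  have ha0 : a 0 = 0 := by simp [ha]
  have hkpos : (0:ℝ) < k := by exact_mod_cast Nat.lt_of_lt_of_le Nat.zero_lt_one hk
  have hpos : ∀ j, 0 ≤ a j := fun j => by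
    apply div_nonneg _ hkpos.le
    positivity
  have hmono : Monotone a := by
    intro j1 j2 h
    have hj : (j1:ℝ) ≤ (j2:ℝ) := by exact_mod_cast h
    show (j1:ℝ) * u / k ≤ (j2:ℝ) * u / k
    gcongr
  have hak : a k = u := by
    rw [ha]; field_simp
  set A : ℕ → Set Ω := fun i => {ω | W (a i) ω ≤ -c ∧ ∀ j < i, -c < W (a j) ω} with hA
  have hAmeas : ∀ i, MeasurableSet (A i) := by
    intro i
    have h1 : A i = {ω | W (a i) ω ≤ -c} ∩ ⋂ (j : ℕ), ⋂ (_ : j < i), {ω | -c < W (a j) ω} := by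
      ext ω; simp [hA]
    rw [h1]
    exact (measurableSet_le (hW.meas _) measurable_const).inter
      (MeasurableSet.iInter fun j => MeasurableSet.iInter fun _ =>
        measurableSet_lt measurable_const (hW.meas _))
  have hdisj2 : ∀ i i', i < i' → Disjoint (A i) (A i') := by
    intro i i' hii
    rw [Set.disjoint_left]
    rintro ω ⟨h1, _⟩ ⟨_, h2'⟩
    exact absurd h1 (not_le.mpr (h2' i hii))
  have hcover : {ω | ∃ j ≤ k, W ((j:ℝ)*u/k) ω ≤ -c} = ⋃ i ∈ Finset.Icc 1 k, A i := by
    ext ω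
    simp only [mem_setOf_eq, mem_iUnion, Finset.mem_Icc, exists_prop]
    constructor
    · rintro ⟨j, hj, hWj⟩
      have hex : ∃ m, m ≤ k ∧ W (a m) ω ≤ -c := ⟨j, hj, hWj⟩
      set m := Nat.find hex with hm
      have hspec := Nat.find_spec hex
      have hm1 : 1 ≤ m := by
        by_contra h0
        push_neg at h0
        have hm0 : Nat.find hex = 0 := by omega
        have h2 := hspec.2
        rw [hm0, ha0, hW.init ω] at h2
        linarith
      refine ⟨m, ⟨hm1, hspec.1⟩, hspec.2, ?_⟩
      intro j' hj'
      by_contra hcon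
      push_neg at hcon
      exact Nat.find_min hex hj' ⟨le_of_lt (lt_of_lt_of_le hj' hspec.1), hcon⟩
    · rintro ⟨i, ⟨_, hik⟩, h1, _⟩
      exact ⟨i, hik, h1⟩
  have hpd : (↑(Finset.Icc 1 k) : Set ℕ).PairwiseDisjoint A := by
    intro i _ i' _ hne
    rcases hne.lt_or_gt with h | h
    · exact hdisj2 i i' h
    · exact (hdisj2 i' i h).symm
  have hkey : ∀ i ∈ Finset.Icc 1 k,
      P (A i) ≤ 2 * P (A i ∩ {ω | W u ω ≤ -c}) := by
    intro i hi
    rw [Finset.mem_Icc] at hi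
    obtain ⟨hi1, hik⟩ := hi
    set C : Set (Fin (i+1) → ℝ) :=
      {x | x ⟨i, Nat.lt_succ_self i⟩ ≤ -c ∧ ∀ j : Fin (i+1), (j:ℕ) < i → -c < x j} with hCdef
    have hC : MeasurableSet C := by
      have h1 : C = {x : Fin (i+1) → ℝ | x ⟨i, Nat.lt_succ_self i⟩ ≤ -c}
          ∩ ⋂ (j : Fin (i+1)), ⋂ (_ : (j:ℕ) < i), {x : Fin (i+1) → ℝ | -c < x j} := by
        ext x; simp [hCdef]
      rw [h1]
      exact (measurableSet_le (measurable_pi_apply _) measurable_const).inter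
        (MeasurableSet.iInter fun j => MeasurableSet.iInter fun _ =>
          measurableSet_lt measurable_const (measurable_pi_apply _))
    have hACV : ∀ ω, ((fun j : Fin (i+1) => W (a j) ω) ∈ C ↔ ω ∈ A i) := by
      intro ω
      simp only [hCdef, hA, mem_setOf_eq]
      constructor
      · rintro ⟨h1, h2⟩
        refine ⟨h1, fun j hj => ?_⟩
        exact h2 ⟨j, hj.trans (Nat.lt_succ_self i)⟩ hj
      · rintro ⟨h1, h2⟩
        exact ⟨h1, fun j hj => h2 (j:ℕ) hj⟩
    have hD1 : MeasurableSet {p : ℝ × ℝ | p.2 ≤ 0} :=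
      measurableSet_le measurable_snd measurable_const
    have hsymm := per_i_symm hW ha0 hpos hmono hik hC hD1
    have he1 : {ω | (fun j : Fin (i+1) => W (a j) ω) ∈ C
        ∧ (W (a i) ω, W (a k) ω - W (a i) ω) ∈ {p : ℝ × ℝ | p.2 ≤ 0}}
        = A i ∩ {ω | W (a k) ω - W (a i) ω ≤ 0} := by
      ext ω
      simp only [mem_setOf_eq, mem_inter_iff, hACV ω, and_comm]
    have he2 : {ω | (fun j : Fin (i+1) => W (a j) ω) ∈ C
        ∧ (W (a i) ω, -(W (a k) ω - W (a i) ω)) ∈ {p : ℝ × ℝ | p.2 ≤ 0}}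
        = A i ∩ {ω | 0 ≤ W (a k) ω - W (a i) ω} := by
      ext ω
      simp only [mem_setOf_eq, mem_inter_iff, hACV ω, neg_nonpos]
    rw [he1, he2] at hsymm
    have hsplit : P (A i) ≤ P (A i ∩ {ω | W (a k) ω - W (a i) ω ≤ 0})
        + P (A i ∩ {ω | 0 ≤ W (a k) ω - W (a i) ω}) := by
      refine le_trans (measure_mono ?_) (measure_union_le _ _)
      intro ω hω
      rcases le_total (W (a k) ω - W (a i) ω) 0 with h | h
      · exact Or.inl ⟨hω, h⟩
      · exact Or.inr ⟨hω, h⟩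
    have hsub : A i ∩ {ω | W (a k) ω - W (a i) ω ≤ 0} ⊆ A i ∩ {ω | W u ω ≤ -c} := by
      rintro ω ⟨hω, hz⟩
      simp only [mem_setOf_eq] at hz ⊢
      refine ⟨hω, ?_⟩
      have h1 : W (a i) ω ≤ -c := hω.1
      have h2 : W u ω ≤ W (a i) ω := by
        rw [← hak]; linarith
      exact le_trans h2 h1
    calc P (A i) ≤ P (A i ∩ {ω | W (a k) ω - W (a i) ω ≤ 0})
          + P (A i ∩ {ω | 0 ≤ W (a k) ω - W (a i) ω}) := hsplit
      _ = 2 * P (A i ∩ {ω | W (a k) ω - W (a i) ω ≤ 0}) := by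
          rw [← hsymm, two_mul]
      _ ≤ 2 * P (A i ∩ {ω | W u ω ≤ -c}) :=
          mul_le_mul_right (measure_mono hsub) 2
  calc P {ω | ∃ j ≤ k, W ((j:ℝ)*u/k) ω ≤ -c}
      = P (⋃ i ∈ Finset.Icc 1 k, A i) := by rw [hcover]
    _ = ∑ i ∈ Finset.Icc 1 k, P (A i) :=
        measure_biUnion_finset hpd (fun i _ => hAmeas i)
    _ ≤ ∑ i ∈ Finset.Icc 1 k, 2 * P (A i ∩ {ω | W u ω ≤ -c}) :=
        Finset.sum_le_sum hkey
    _ = 2 * ∑ i ∈ Finset.Icc 1 k, P (A i ∩ {ω | W u ω ≤ -c}) := by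
        rw [Finset.mul_sum]
    _ = 2 * P (⋃ i ∈ Finset.Icc 1 k, (A i ∩ {ω | W u ω ≤ -c})) := by
        rw [measure_biUnion_finset]
        · exact fun i hi i' hi' hne =>
            Disjoint.mono inter_subset_left inter_subset_left (hpd hi hi' hne)
        · exact fun i _ => (hAmeas i).inter
            (measurableSet_le (hW.meas u) measurable_const)
    _ ≤ 2 * P {ω | W u ω ≤ -c} := by
        refine mul_le_mul_right (measure_mono ?_) 2
        intro ω hω
        simp only [mem_iUnion] at hω
        obtain ⟨i, _, _, h2⟩ := hω
        exact h2

lemma prob_W_le_neg (hW : IsBrownianMotion P W) {u c : ℝ} (hu : 0 < u) (hc : 0 ≤ c) :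
    P {ω | W u ω ≤ -c} ≤ ENNReal.ofReal (Real.exp (-c^2 / (2*u))) := by
  have h1 : {ω | W u ω ≤ -c} = {ω | W u ω ∈ Iic (-c)} := rfl
  rw [h1, prob_W_mem hW hu.le measurableSet_Iic]
  have h2 := gauss_Iic_tail u.toNNReal hc
  rwa [Real.coe_toNNReal u hu.le] at h2

lemma bm_neg (hW : IsBrownianMotion P W) : IsBrownianMotion P (fun t ω => -W t ω) where
  isProb := hW.isProb
  init := fun ω => by rw [hW.init ω, neg_zero]
  cont := fun ω => (hW.cont ω).neg
  meas := fun t => (hW.meas t).neg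
  gauss := fun s t hs hst => by
    have he : (fun ω => -W t ω - -W s ω) = (fun x : ℝ => -x) ∘ (fun ω => W t ω - W s ω) := by
      funext ω; show -W t ω - -W s ω = -(W t ω - W s ω); ring
    rw [he, ← Measure.map_map (g := fun x : ℝ => -x) (f := fun ω => W t ω - W s ω) measurable_neg ((hW.meas t).sub (hW.meas s)),
      hW.gauss s t hs hst, gauss_neg]
  indep := fun n ts hpos hmono => by
    have h := (hW.indep n ts hpos hmono).comp (g := fun _ => (fun x : ℝ => -x))
      (fun _ => measurable_neg)
    have he : (fun (i : Fin n) (ω : Ω) => -W (ts i.succ) ω - -W (ts i.castSucc) ω)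
        = fun (i : Fin n) => (fun x : ℝ => -x) ∘ (fun ω => W (ts i.succ) ω - W (ts i.castSucc) ω) := by
      funext i ω
      show -W (ts i.succ) ω - -W (ts i.castSucc) ω = -(W (ts i.succ) ω - W (ts i.castSucc) ω)
      ring
    rw [he]
    exact h

lemma tool_A (hW : IsBrownianMotion P W) {u c : ℝ} (hu : 0 < u) (hc : 0 < c) :
    P {ω | ∃ s ∈ Icc 0 u, W s ω ≤ -c} ≤ ENNReal.ofReal (2 * Real.exp (-c^2/(8*u))) := by
  haveI := hW.isProb
  set Sk : ℕ → Set Ω := fun m => {ω | ∃ j : ℕ, j ≤ 2^m ∧ W ((j:ℝ)*u/((2^m : ℕ):ℝ)) ω ≤ -(c/2)} with hSk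
  have hmonoSk : Monotone Sk := by
    apply monotone_nat_of_le_succ
    intro m ω hω
    obtain ⟨j, hj, hWj⟩ := hω
    have h2succ : 2^(m+1) = 2 * 2^m := by rw [pow_succ]; ring
    refine ⟨2*j, by omega, ?_⟩
    have harg : ((2*j:ℕ):ℝ)*u/((2^(m+1):ℕ):ℝ) = (j:ℝ)*u/((2^m:ℕ):ℝ) := by
      have h2m : ((2^m:ℕ):ℝ) ≠ 0 := by positivity
      push_cast [pow_succ]
      field_simp
    rw [harg]
    exact hWj
  have hincl : {ω | ∃ s ∈ Icc 0 u, W s ω ≤ -c} ⊆ ⋃ m, Sk m := by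
    intro ω hω
    obtain ⟨s, ⟨hs0, hsu⟩, hWs⟩ := hω
    have hcf : ContinuousAt (fun t => W t ω) s := (hW.cont ω).continuousAt
    obtain ⟨δ, hδpos, hδ⟩ := Metric.continuousAt_iff.mp hcf (c/2) (by positivity)
    obtain ⟨m, hm⟩ := pow_unbounded_of_one_lt (u/δ) (one_lt_two (α := ℝ))
    have h2mpos : (0:ℝ) < ((2^m:ℕ):ℝ) := by positivity
    have hstep : u/((2^m:ℕ):ℝ) < δ := by
      rw [div_lt_iff₀ h2mpos]
      rw [div_lt_iff₀ hδpos] at hm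
      push_cast
      push_cast at hm
      linarith
    set j : ℕ := ⌊s * ((2^m:ℕ):ℝ) / u⌋₊ with hj
    have harg_nonneg : 0 ≤ s * ((2^m:ℕ):ℝ) / u := by positivity
    have hjle : j ≤ 2^m := by
      have h1 : s * ((2^m:ℕ):ℝ) / u ≤ ((2^m:ℕ):ℝ) := by
        rw [div_le_iff₀ hu]
        nlinarith
      calc j ≤ ⌊((2^m:ℕ):ℝ)⌋₊ := Nat.floor_mono h1
        _ = 2^m := by rw [Nat.floor_natCast]
    set g : ℝ := (j:ℝ)*u/((2^m:ℕ):ℝ) with hg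
    have hgle : g ≤ s := by
      have h1 : (j:ℝ) ≤ s * ((2^m:ℕ):ℝ) / u := Nat.floor_le harg_nonneg
      rw [hg, div_le_iff₀ h2mpos]
      rw [le_div_iff₀ hu] at h1
      linarith
    have hslt : s - g < u/((2^m:ℕ):ℝ) := by
      have h1 : s * ((2^m:ℕ):ℝ) / u < (j:ℝ) + 1 := Nat.lt_floor_add_one _
      rw [div_lt_iff₀ hu] at h1
      have h2 : s < ((j:ℝ)+1) * u / ((2^m:ℕ):ℝ) := by
        rw [lt_div_iff₀ h2mpos]
        nlinarith
      have h3 : ((j:ℝ)+1) * u / ((2^m:ℕ):ℝ) = (j:ℝ)*u/((2^m:ℕ):ℝ) + u/((2^m:ℕ):ℝ) := by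
        ring
      rw [h3] at h2
      rw [hg]
      linarith
    have hdist : dist g s < δ := by
      rw [Real.dist_eq, abs_of_nonpos (by linarith)]
      linarith
    have hWg : W g ω ≤ -(c/2) := by
      have h1 := hδ hdist
      rw [Real.dist_eq] at h1
      have h2 : W g ω - W s ω < c/2 := lt_of_abs_lt h1
      linarith
    exact mem_iUnion.mpr ⟨m, j, hjle, hWg⟩
  calc P {ω | ∃ s ∈ Icc 0 u, W s ω ≤ -c} ≤ P (⋃ m, Sk m) := measure_mono hincl
    _ = ⨆ m, P (Sk m) := hmonoSk.measure_iUnion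
    _ ≤ ENNReal.ofReal (2 * Real.exp (-c^2/(8*u))) := by
        apply iSup_le
        intro m
        have h1 := skeleton_le hW hu (by positivity : (0:ℝ) < c/2) (Nat.one_le_two_pow (n := m))
        refine h1.trans ?_
        have h2 := prob_W_le_neg hW hu (by positivity : (0:ℝ) ≤ c/2)
        have h3 : -(c/2)^2 / (2*u) = -c^2/(8*u) := by ring
        rw [h3] at h2
        calc 2 * P {ω | W u ω ≤ -(c/2)} ≤ 2 * ENNReal.ofReal (Real.exp (-c^2/(8*u))) :=
              mul_le_mul_right h2 2
          _ = ENNReal.ofReal (2 * Real.exp (-c^2/(8*u))) := by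
              rw [ENNReal.ofReal_mul (by norm_num : (0:ℝ) ≤ 2)]
              norm_num

lemma tool_A' (hW : IsBrownianMotion P W) {u c : ℝ} (hu : 0 < u) (hc : 0 < c) :
    P {ω | ∃ s ∈ Icc 0 u, c ≤ W s ω} ≤ ENNReal.ofReal (2 * Real.exp (-c^2/(8*u))) := by
  have h := tool_A (bm_neg hW) hu hc
  have he : {ω | ∃ s ∈ Icc 0 u, (fun (t : ℝ) (ω : Ω) => -W t ω) s ω ≤ -c}
      = {ω | ∃ s ∈ Icc 0 u, c ≤ W s ω} := by
    ext ω
    simp only [mem_setOf_eq]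
    constructor <;> (rintro ⟨s, hs, h2⟩; exact ⟨s, hs, by linarith⟩)
  rwa [he] at h

lemma skeleton_stay (hW : IsBrownianMotion P W) {u c : ℝ} (hu : 0 < u) (hc : 0 < c)
    {k : ℕ} (hk : 1 ≤ k) :
    P {ω | ∀ j ≤ k, -c < W ((j:ℝ)*u/k) ω}
      ≤ ENNReal.ofReal (7*c/Real.sqrt (2*Real.pi*u))
        + (k:ℝ≥0∞) * ENNReal.ofReal (Real.exp (-c^2*(k:ℝ)/(2*u))) := by
  haveI := hW.isProb
  classical
  set a : ℕ → ℝ := fun j => (j:ℝ)*u/k with ha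
  have ha0 : a 0 = 0 := by simp [ha]
  have hkpos : (0:ℝ) < k := by exact_mod_cast Nat.lt_of_lt_of_le Nat.zero_lt_one hk
  have hpos : ∀ j, 0 ≤ a j := fun j => by
    apply div_nonneg _ hkpos.le
    positivity
  have hmono : Monotone a := by
    intro j1 j2 h
    have hj : (j1:ℝ) ≤ (j2:ℝ) := by exact_mod_cast h
    show (j1:ℝ) * u / k ≤ (j2:ℝ) * u / k
    gcongr
  have hak : a k = u := by rw [ha]; field_simp
  have hune : u.toNNReal ≠ 0 := by
    simp only [ne_eq, Real.toNNReal_eq_zero, not_le]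
    exact hu
  have hucoe : (u.toNNReal : ℝ) = u := Real.coe_toNNReal u hu.le
  set μu := gaussianReal 0 u.toNNReal with hμu
  set S : Set Ω := {ω | ∀ j ≤ k, -c < W ((j:ℝ)*u/k) ω} with hS
  set A' : ℕ → Set Ω := fun i =>
    {ω | (W (a i) ω ≤ -c ∧ -(2*c) ≤ W (a i) ω) ∧ ∀ j < i, -c < W (a j) ω} with hA'
  set E : Set Ω := {ω | c < W u ω} with hE
  set O : Set Ω := ⋃ j ∈ Finset.range k, {ω | W (a (j+1)) ω - W (a j) ω ≤ -c} with hO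
  have hEmeas : MeasurableSet E := measurableSet_lt measurable_const (hW.meas u)
  have hA'meas : ∀ i, MeasurableSet (A' i) := by
    intro i
    have h1 : A' i = ({ω | W (a i) ω ≤ -c} ∩ {ω | -(2*c) ≤ W (a i) ω})
        ∩ ⋂ (j : ℕ), ⋂ (_ : j < i), {ω | -c < W (a j) ω} := by
      ext ω; simp [hA']
    rw [h1]
    exact (((measurableSet_le (hW.meas _) measurable_const)).inter
        (measurableSet_le measurable_const (hW.meas _))).inter
      (MeasurableSet.iInter fun j => MeasurableSet.iInter fun _ =>
        measurableSet_lt measurable_const (hW.meas _))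
  have hdisj2 : ∀ i i', i < i' → Disjoint (A' i) (A' i') := by
    intro i i' hii
    rw [Set.disjoint_left]
    rintro ω ⟨⟨h1, _⟩, _⟩ ⟨_, h2'⟩
    exact absurd h1 (not_le.mpr (h2' i hii))
  have hpd : (↑(Finset.Icc 1 k) : Set ℕ).PairwiseDisjoint A' := by
    intro i _ i' _ hne
    rcases hne.lt_or_gt with h | h
    · exact hdisj2 i i' h
    · exact (hdisj2 i' i h).symm
  have hSA : ∀ i ∈ Finset.Icc 1 k, Disjoint S (A' i) := by
    intro i hi
    rw [Finset.mem_Icc] at hi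
    rw [Set.disjoint_left]
    rintro ω hωS ⟨⟨h1, _⟩, _⟩
    exact absurd h1 (not_le.mpr (hωS i hi.2))
  -- (m1)
  have hm1 : P (S ∩ {ω | W u ω ≤ c}) ≤ ENNReal.ofReal (2*c/Real.sqrt (2*Real.pi*u)) := by
    have hsub : S ∩ {ω | W u ω ≤ c} ⊆ {ω | W u ω ∈ Icc (-c) c} := by
      rintro ω ⟨hωS, hωc⟩
      simp only [mem_setOf_eq] at hωc ⊢
      refine ⟨?_, hωc⟩
      have h6 := hωS k le_rfl
      have h5 : (k:ℝ)*u/(k:ℝ) = u := by field_simp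
      rw [h5] at h6
      exact h6.le
    refine (measure_mono hsub).trans ?_
    rw [prob_W_mem hW hu.le measurableSet_Icc]
    have h2 := gauss_interval hune (-c) c
    rw [hucoe] at h2
    refine h2.trans (ENNReal.ofReal_le_ofReal ?_)
    rw [div_eq_mul_inv]
    nlinarith [inv_nonneg.mpr (Real.sqrt_nonneg (2*Real.pi*u))]
  -- (m3)
  have hm3 : P O ≤ (k:ℝ≥0∞) * ENNReal.ofReal (Real.exp (-c^2*(k:ℝ)/(2*u))) := by
    refine (measure_biUnion_finset_le _ _).trans ?_
    have hterm : ∀ j ∈ Finset.range k,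
        P {ω | W (a (j+1)) ω - W (a j) ω ≤ -c}
          ≤ ENNReal.ofReal (Real.exp (-c^2*(k:ℝ)/(2*u))) := by
      intro j _
      have hlaw := hW.gauss (a j) (a (j+1)) (hpos j) (hmono (Nat.le_succ j))
      have hvar : a (j+1) - a j = u/k := by
        show ((j+1:ℕ):ℝ)*u/k - (j:ℝ)*u/k = u/k
        push_cast
        ring
      rw [hvar] at hlaw
      have hset : {ω | W (a (j+1)) ω - W (a j) ω ≤ -c}
          = (fun ω => W (a (j+1)) ω - W (a j) ω) ⁻¹' (Iic (-c)) := rfl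
      rw [hset, ← Measure.map_apply (f := fun ω => W (a (j+1)) ω - W (a j) ω) ((hW.meas _).sub (hW.meas _)) measurableSet_Iic, hlaw]
      have h3 := gauss_Iic_tail (u/k).toNNReal hc.le
      have h4 : ((u/k).toNNReal : ℝ) = u/k := Real.coe_toNNReal _ (by positivity)
      rw [h4] at h3
      refine h3.trans (ENNReal.ofReal_le_ofReal (Real.exp_le_exp.mpr (le_of_eq ?_)))
      field_simp
    calc ∑ j ∈ Finset.range k, P {ω | W (a (j+1)) ω - W (a j) ω ≤ -c}
        ≤ ∑ _j ∈ Finset.range k, ENNReal.ofReal (Real.exp (-c^2*(k:ℝ)/(2*u))) :=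
          Finset.sum_le_sum hterm
      _ = (k:ℝ≥0∞) * ENNReal.ofReal (Real.exp (-c^2*(k:ℝ)/(2*u))) := by
          rw [Finset.sum_const, Finset.card_range, nsmul_eq_mul]
  -- (c) per-i reflection
  have hrefl : ∀ i ∈ Finset.Icc 1 k,
      P (A' i ∩ {ω | W u ω ≤ -(6*c)}) ≤ P (A' i ∩ E) := by
    intro i hi
    rw [Finset.mem_Icc] at hi
    obtain ⟨hi1, hik⟩ := hi
    set C : Set (Fin (i+1) → ℝ) :=
      {x | (x ⟨i, Nat.lt_succ_self i⟩ ≤ -c ∧ -(2*c) ≤ x ⟨i, Nat.lt_succ_self i⟩)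
        ∧ ∀ j : Fin (i+1), (j:ℕ) < i → -c < x j} with hCdef
    have hC : MeasurableSet C := by
      have h1 : C = ({x : Fin (i+1) → ℝ | x ⟨i, Nat.lt_succ_self i⟩ ≤ -c}
            ∩ {x : Fin (i+1) → ℝ | -(2*c) ≤ x ⟨i, Nat.lt_succ_self i⟩})
          ∩ ⋂ (j : Fin (i+1)), ⋂ (_ : (j:ℕ) < i), {x : Fin (i+1) → ℝ | -c < x j} := by
        ext x; simp [hCdef]
      rw [h1]
      exact (((measurableSet_le (measurable_pi_apply _) measurable_const)).inter
          (measurableSet_le measurable_const (measurable_pi_apply _))).inter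
        (MeasurableSet.iInter fun j => MeasurableSet.iInter fun _ =>
          measurableSet_lt measurable_const (measurable_pi_apply _))
    have hACV : ∀ ω, ((fun j : Fin (i+1) => W (a j) ω) ∈ C ↔ ω ∈ A' i) := by
      intro ω
      simp only [hCdef, hA', mem_setOf_eq]
      constructor
      · rintro ⟨h1, h2⟩
        exact ⟨h1, fun j hj => h2 ⟨j, hj.trans (Nat.lt_succ_self i)⟩ hj⟩
      · rintro ⟨h1, h2⟩
        exact ⟨h1, fun j hj => h2 (j:ℕ) hj⟩
    have hD : MeasurableSet {p : ℝ × ℝ | c < p.1 - p.2} :=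
      measurableSet_lt measurable_const (measurable_fst.sub measurable_snd)
    have hsymm := per_i_symm hW ha0 hpos hmono hik hC hD
    have he1 : {ω | (fun j : Fin (i+1) => W (a j) ω) ∈ C
        ∧ (W (a i) ω, W (a k) ω - W (a i) ω) ∈ {p : ℝ × ℝ | c < p.1 - p.2}}
        = A' i ∩ {ω | c < 2 * W (a i) ω - W u ω} := by
      ext ω
      simp only [mem_setOf_eq, mem_inter_iff, hACV ω, ← hak]
      constructor
      · rintro ⟨h1, h2⟩; exact ⟨h1, by linarith⟩
      · rintro ⟨h1, h2⟩; exact ⟨h1, by linarith⟩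
    have he2 : {ω | (fun j : Fin (i+1) => W (a j) ω) ∈ C
        ∧ (W (a i) ω, -(W (a k) ω - W (a i) ω)) ∈ {p : ℝ × ℝ | c < p.1 - p.2}}
        = A' i ∩ E := by
      ext ω
      simp only [mem_setOf_eq, mem_inter_iff, hACV ω, hE, ← hak]
      constructor
      · rintro ⟨h1, h2⟩; exact ⟨h1, by linarith⟩
      · rintro ⟨h1, h2⟩; exact ⟨h1, by linarith⟩
    rw [he1, he2] at hsymm
    rw [← hsymm]
    refine measure_mono ?_
    rintro ω ⟨hωA, hω6⟩
    simp only [mem_setOf_eq] at hω6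
    refine ⟨hωA, ?_⟩
    show c < 2 * W (a i) ω - W u ω
    have h1 : -(2*c) ≤ W (a i) ω := hωA.1.2
    linarith
  -- (d) cover of the far-left tail
  have hcover : {ω | W u ω ≤ -(6*c)}
      ⊆ (⋃ i ∈ Finset.Icc 1 k, (A' i ∩ {ω | W u ω ≤ -(6*c)})) ∪ O := by
    intro ω hω
    simp only [mem_setOf_eq] at hω
    have hex : ∃ m, m ≤ k ∧ W (a m) ω ≤ -c := by
      refine ⟨k, le_rfl, ?_⟩
      rw [hak]
      linarith
    set m := Nat.find hex with hm
    have hspec := Nat.find_spec hex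
    have hm1 : 1 ≤ m := by
      by_contra h0
      push_neg at h0
      have hm0 : Nat.find hex = 0 := by omega
      have h2 := hspec.2
      rw [hm0, ha0, hW.init ω] at h2
      linarith
    have hmin : ∀ j < m, -c < W (a j) ω := by
      intro j hj
      by_contra hcon
      push_neg at hcon
      exact Nat.find_min hex hj ⟨le_of_lt (lt_of_lt_of_le hj hspec.1), hcon⟩
    by_cases hov : -(2*c) ≤ W (a m) ω
    · left
      refine mem_biUnion (Finset.mem_Icc.mpr ⟨hm1, hspec.1⟩) ?_
      exact ⟨⟨⟨hspec.2, hov⟩, hmin⟩, hω⟩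
    · right
      push_neg at hov
      have hmk : m ≤ k := hspec.1
      refine mem_biUnion (Finset.mem_range.mpr (show m - 1 < k by omega)) ?_
      simp only [mem_setOf_eq]
      have hmm : m - 1 + 1 = m := by omega
      rw [hmm]
      have h1 : -c < W (a (m-1)) ω := hmin (m-1) (by omega)
      linarith
  -- (b) additive disjointness bound
  have hb : P (S ∩ E) + ∑ i ∈ Finset.Icc 1 k, P (A' i ∩ E) ≤ P E := by
    have h1 : ∑ i ∈ Finset.Icc 1 k, P (A' i ∩ E)
        = P (⋃ i ∈ Finset.Icc 1 k, (A' i ∩ E)) := by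
      rw [measure_biUnion_finset]
      · exact fun i hi i' hi' hne =>
          Disjoint.mono inter_subset_left inter_subset_left (hpd hi hi' hne)
      · exact fun i _ => (hA'meas i).inter hEmeas
    have hdSU : Disjoint (S ∩ E) (⋃ i ∈ Finset.Icc 1 k, (A' i ∩ E)) := by
      rw [Set.disjoint_left]
      rintro ω ⟨hωS, _⟩ hω2
      simp only [mem_iUnion] at hω2
      obtain ⟨i, hi, hωA, _⟩ := hω2
      exact absurd hωA (Set.disjoint_left.mp (hSA i hi) hωS)
    rw [h1, ← measure_union hdSU (MeasurableSet.biUnion (Finset.Icc 1 k).countable_toSet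
      (fun i _ => (hA'meas i).inter hEmeas))]
    refine measure_mono ?_
    rintro ω (⟨_, h2⟩ | h2)
    · exact h2
    · simp only [mem_iUnion] at h2
      obtain ⟨i, _, _, h3⟩ := h2
      exact h3
  -- chain
  have hchain : P (S ∩ E) + P {ω | W u ω ≤ -(6*c)} ≤ P E + P O := by
    have h1 : P {ω | W u ω ≤ -(6*c)}
        ≤ ∑ i ∈ Finset.Icc 1 k, P (A' i ∩ {ω | W u ω ≤ -(6*c)}) + P O := by
      refine (measure_mono hcover).trans ?_
      refine (measure_union_le _ _).trans ?_
      gcongr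
      exact measure_biUnion_finset_le _ _
    have h2 : ∑ i ∈ Finset.Icc 1 k, P (A' i ∩ {ω | W u ω ≤ -(6*c)})
        ≤ ∑ i ∈ Finset.Icc 1 k, P (A' i ∩ E) := Finset.sum_le_sum hrefl
    calc P (S ∩ E) + P {ω | W u ω ≤ -(6*c)}
        ≤ P (S ∩ E) + (∑ i ∈ Finset.Icc 1 k, P (A' i ∩ E) + P O) := by
          refine add_le_add_right (h1.trans (add_le_add_left h2 _)) _
      _ = (P (S ∩ E) + ∑ i ∈ Finset.Icc 1 k, P (A' i ∩ E)) + P O := by ring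
      _ ≤ P E + P O := add_le_add_left hb _
  -- (f)
  have hf : P E ≤ P {ω | W u ω ≤ -(6*c)} + ENNReal.ofReal (5*c/Real.sqrt (2*Real.pi*u)) := by
    have h1 : E ⊆ {ω | W u ω ∈ Ici (6*c)} ∪ {ω | W u ω ∈ Icc c (6*c)} := by
      intro ω hω
      simp only [hE, mem_setOf_eq] at hω
      rcases le_total (6*c) (W u ω) with h | h
      · exact Or.inl h
      · exact Or.inr ⟨hω.le, h⟩
    refine (measure_mono h1).trans ((measure_union_le _ _).trans ?_)
    have h2 : P {ω | W u ω ∈ Ici (6*c)} = P {ω | W u ω ≤ -(6*c)} := by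
      rw [prob_W_mem hW hu.le measurableSet_Ici,
        show {ω | W u ω ≤ -(6*c)} = {ω | W u ω ∈ Iic (-(6*c))} from rfl,
        prob_W_mem hW hu.le measurableSet_Iic, gauss_Iic_eq_Ici, neg_neg]
    have h3 : P {ω | W u ω ∈ Icc c (6*c)} ≤ ENNReal.ofReal (5*c/Real.sqrt (2*Real.pi*u)) := by
      rw [prob_W_mem hW hu.le measurableSet_Icc]
      have h4 := gauss_interval hune c (6*c)
      rw [hucoe] at h4
      refine h4.trans (ENNReal.ofReal_le_ofReal (le_of_eq ?_))
      rw [div_eq_mul_inv]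
      ring
    rw [h2]
    exact add_le_add_right h3 _
  -- (g) cancel
  have hg : P (S ∩ E) ≤ ENNReal.ofReal (5*c/Real.sqrt (2*Real.pi*u)) + P O := by
    have h1 : P (S ∩ E) + P {ω | W u ω ≤ -(6*c)}
        ≤ (ENNReal.ofReal (5*c/Real.sqrt (2*Real.pi*u)) + P O) + P {ω | W u ω ≤ -(6*c)} := by
      refine hchain.trans ?_
      calc P E + P O ≤ (P {ω | W u ω ≤ -(6*c)} + ENNReal.ofReal (5*c/Real.sqrt (2*Real.pi*u))) + P O :=
            add_le_add_left hf _
        _ = (ENNReal.ofReal (5*c/Real.sqrt (2*Real.pi*u)) + P O) + P {ω | W u ω ≤ -(6*c)} := by ring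
    exact ENNReal.le_of_add_le_add_right (measure_ne_top P _) h1
  -- total
  have hsplit : P S ≤ P (S ∩ {ω | W u ω ≤ c}) + P (S ∩ E) := by
    refine le_trans (measure_mono ?_) (measure_union_le _ _)
    intro ω hω
    rcases le_or_gt (W u ω) c with h | h
    · exact Or.inl ⟨hω, h⟩
    · exact Or.inr ⟨hω, h⟩
  calc P S ≤ P (S ∩ {ω | W u ω ≤ c}) + P (S ∩ E) := hsplit
    _ ≤ ENNReal.ofReal (2*c/Real.sqrt (2*Real.pi*u))
        + (ENNReal.ofReal (5*c/Real.sqrt (2*Real.pi*u)) + P O) := add_le_add hm1 hg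
    _ ≤ ENNReal.ofReal (2*c/Real.sqrt (2*Real.pi*u))
        + (ENNReal.ofReal (5*c/Real.sqrt (2*Real.pi*u))
          + (k:ℝ≥0∞) * ENNReal.ofReal (Real.exp (-c^2*(k:ℝ)/(2*u)))) := by
          exact add_le_add_right (add_le_add_right hm3 _) _
    _ = ENNReal.ofReal (7*c/Real.sqrt (2*Real.pi*u))
        + (k:ℝ≥0∞) * ENNReal.ofReal (Real.exp (-c^2*(k:ℝ)/(2*u))) := by
          rw [← add_assoc, ← ENNReal.ofReal_add (by positivity) (by positivity)]
          congr 2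
          rw [← add_div]
          ring_nf

lemma tool_B (hW : IsBrownianMotion P W) {u c : ℝ} (hu : 0 < u) (hc : 0 < c) :
    P {ω | ∀ s ∈ Icc 0 u, -c < W s ω} ≤ ENNReal.ofReal (7*c/Real.sqrt (2*Real.pi*u)) := by
  haveI := hW.isProb
  have hsub : ∀ k : ℕ, 1 ≤ k →
      {ω | ∀ s ∈ Icc 0 u, -c < W s ω} ⊆ {ω | ∀ j ≤ k, -c < W ((j:ℝ)*u/k) ω} := by
    intro k hk ω hω j hj
    have hkpos : (0:ℝ) < k := by exact_mod_cast Nat.lt_of_lt_of_le Nat.zero_lt_one hk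
    apply hω
    constructor
    · positivity
    · rw [div_le_iff₀ hkpos]
      have hjk : (j:ℝ) ≤ (k:ℝ) := by exact_mod_cast hj
      nlinarith
  refine ENNReal.le_of_forall_pos_le_add ?_
  intro ε hε _hlt
  set r := Real.exp (-c^2/(2*u)) with hr
  have hr1 : r < 1 := by
    rw [hr, Real.exp_lt_one_iff]
    exact div_neg_of_neg_of_pos (by nlinarith) (by linarith)
  have hrnn : ‖r‖ < 1 := by
    rw [Real.norm_eq_abs, abs_of_pos (Real.exp_pos _)]
    exact hr1
  have hsummable := summable_pow_mul_geometric_of_norm_lt_one (R := ℝ) 1 hrnn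
  have htend := hsummable.tendsto_atTop_zero
  have hεpos : (0:ℝ) < (ε:ℝ) := hε
  have hev : ∀ᶠ n : ℕ in Filter.atTop, (n:ℝ)^1 * r^n < (ε:ℝ) := by
    have := htend.eventually (gt_mem_nhds hεpos)
    simpa using this
  obtain ⟨k, hkb, hk1⟩ := (hev.and (Filter.eventually_ge_atTop 1)).exists
  refine (measure_mono (hsub k hk1)).trans ?_
  refine (skeleton_stay hW hu hc hk1).trans ?_
  apply add_le_add_right
  have heq : (k:ℝ≥0∞) * ENNReal.ofReal (Real.exp (-c^2*(k:ℝ)/(2*u)))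
      = ENNReal.ofReal ((k:ℝ) * r^k) := by
    rw [ENNReal.ofReal_mul (Nat.cast_nonneg k), ENNReal.ofReal_natCast]
    congr 2
    rw [hr, ← Real.exp_nat_mul]
    congr 1
    ring
  rw [heq]
  calc ENNReal.ofReal ((k:ℝ) * r^k) ≤ ENNReal.ofReal (ε:ℝ) := by
        refine ENNReal.ofReal_le_ofReal ?_
        have := hkb
        rw [pow_one] at this
        exact this.le
    _ = (ε : ℝ≥0∞) := ENNReal.ofReal_coe_nnreal

lemma tool_B' (hW : IsBrownianMotion P W) {u c : ℝ} (hu : 0 < u) (hc : 0 < c) :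
    P {ω | ∀ s ∈ Icc 0 u, W s ω < c} ≤ ENNReal.ofReal (7*c/Real.sqrt (2*Real.pi*u)) := by
  have h := tool_B (bm_neg hW) hu hc
  have he : {ω | ∀ s ∈ Icc 0 u, -c < (fun (t : ℝ) (ω : Ω) => -W t ω) s ω}
      = {ω | ∀ s ∈ Icc 0 u, W s ω < c} := by
    ext ω
    simp only [mem_setOf_eq]
    constructor <;> (intro h2 s hs; have := h2 s hs; linarith)
  rwa [he] at h

section Det

variable {Ω : Type*} {W : ℝ → Ω → ℝ} {ω : Ω}

lemma runInf_bddBelow (hcont : Continuous fun t => W t ω) {t : ℝ} (_ht : 0 ≤ t) :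
    BddBelow ((fun u => W u ω) '' Icc 0 t) :=
  (isCompact_Icc.image_of_continuousOn hcont.continuousOn).bddBelow

lemma runInf_le (hcont : Continuous fun t => W t ω) {t s : ℝ} (ht : 0 ≤ t)
    (hs : s ∈ Icc 0 t) : runInf W ω t ≤ W s ω :=
  csInf_le (runInf_bddBelow hcont ht) ⟨s, hs, rfl⟩

lemma runInf_attained (hcont : Continuous fun t => W t ω) {t : ℝ} (ht : 0 ≤ t) :
    ∃ s ∈ Icc 0 t, W s ω = runInf W ω t := by
  obtain ⟨s, hs, hmin⟩ := isCompact_Icc.exists_isMinOn (nonempty_Icc.mpr ht)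
    hcont.continuousOn
  refine ⟨s, hs, le_antisymm ?_ (runInf_le hcont ht hs)⟩
  refine le_csInf ⟨W 0 ω, ⟨0, ⟨le_rfl, ht⟩, rfl⟩⟩ ?_
  rintro y ⟨x, hx, rfl⟩
  exact hmin hx

lemma runInf_nonpos (hcont : Continuous fun t => W t ω) (h0 : W 0 ω = 0) {t : ℝ}
    (ht : 0 ≤ t) : runInf W ω t ≤ 0 := by
  have := runInf_le hcont ht ⟨le_rfl, ht⟩
  rwa [h0] at this

lemma runInf_anti (hcont : Continuous fun t => W t ω) {a b : ℝ} (ha : 0 ≤ a)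
    (hab : a ≤ b) : runInf W ω b ≤ runInf W ω a := by
  refine csInf_le_csInf (runInf_bddBelow hcont (ha.trans hab)) ?_
    (image_mono (Icc_subset_Icc_right hab))
  exact ⟨W 0 ω, ⟨0, ⟨le_rfl, ha⟩, rfl⟩⟩

lemma runInf_contOn (hcont : Continuous fun t => W t ω) :
    ContinuousOn (runInf W ω) (Ici 0) := by
  intro t ht
  have ht0 : (0:ℝ) ≤ t := ht
  rw [Metric.continuousWithinAt_iff]
  intro ε hε
  have hucont : UniformContinuousOn (fun u => W u ω) (Icc 0 (t+1)) :=
    isCompact_Icc.uniformContinuousOn_of_continuous hcont.continuousOn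
  rw [Metric.uniformContinuousOn_iff] at hucont
  obtain ⟨δ₀, hδ₀, hδ⟩ := hucont (ε/2) (by linarith)
  refine ⟨min δ₀ 1, lt_min hδ₀ one_pos, ?_⟩
  intro y hy hdist
  have hy0 : (0:ℝ) ≤ y := hy
  have key : ∀ p q : ℝ, 0 ≤ p → p ≤ q → q ≤ t+1 → q - p < δ₀ →
      runInf W ω q ≤ runInf W ω p ∧ runInf W ω p ≤ runInf W ω q + ε/2 := by
    intro p q hp hpq hq1 hqp
    refine ⟨runInf_anti hcont hp hpq, ?_⟩
    obtain ⟨s, hs, hseq⟩ := runInf_attained hcont (hp.trans hpq)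
    rcases le_or_gt s p with hsp | hsp
    · have h1 : runInf W ω p ≤ W s ω := runInf_le hcont hp ⟨hs.1, hsp⟩
      rw [hseq] at h1
      linarith
    · have h1 : dist p s < δ₀ := by
        rw [Real.dist_eq, abs_of_nonpos (by linarith)]
        linarith [hs.2]
      have h2 := hδ p ⟨hp, by linarith⟩ s ⟨hs.1, by linarith [hs.2]⟩ h1
      rw [Real.dist_eq] at h2
      have h3 : W p ω - W s ω < ε/2 := lt_of_abs_lt h2
      have h4 : runInf W ω p ≤ W p ω := runInf_le hcont hp ⟨hp, le_rfl⟩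
      rw [hseq] at h3
      linarith
  rw [Real.dist_eq] at hdist ⊢
  rcases le_total y t with hyt | hty
  · have hty2 : t - y < δ₀ := by
      have h5 : t - y ≤ |y - t| := by rw [abs_sub_comm]; exact le_abs_self _
      have h6 : |y - t| < δ₀ := lt_of_lt_of_le hdist (min_le_left _ _)
      linarith
    obtain ⟨hA, hB⟩ := key y t hy0 hyt (by linarith) hty2
    have : |runInf W ω y - runInf W ω t| ≤ ε/2 := abs_le.mpr ⟨by linarith, by linarith⟩
    linarith
  · have hty2 : y - t < δ₀ := by
      have h5 : y - t ≤ |y - t| := le_abs_self _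
      have h6 : |y - t| < δ₀ := lt_of_lt_of_le hdist (min_le_left _ _)
      linarith
    have hyt1 : y ≤ t + 1 := by
      have h5 : y - t ≤ |y - t| := le_abs_self _
      have h6 : |y - t| < 1 := lt_of_lt_of_le hdist (min_le_right _ _)
      linarith
    obtain ⟨hA, hB⟩ := key t y ht0 hty hyt1 hty2
    have : |runInf W ω y - runInf W ω t| ≤ ε/2 := abs_le.mpr ⟨by linarith, by linarith⟩
    linarith

lemma runInf_zero (hcont : Continuous fun t => W t ω) : runInf W ω 0 = W 0 ω := by
  rw [runInf, Icc_self, image_singleton, csInf_singleton]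

/-- If the path exceeds `r` somewhere, `τ_r` is a genuine member of its defining set. -/
lemma tau_mem (hcont : Continuous fun t => W t ω) (h0 : W 0 ω = 0) {r : ℝ} (hr : 0 < r)
    (hex : ∃ s, 0 ≤ s ∧ r < W s ω) :
    0 ≤ tauPlus W r ω ∧ W (tauPlus W r ω) ω - runInf W ω (tauPlus W r ω) = r := by
  obtain ⟨s1, hs1, hs1r⟩ := hex
  set g : ℝ → ℝ := fun s => W s ω - runInf W ω s with hg
  have hgcont : ContinuousOn g (Ici 0) :=
    hcont.continuousOn.sub (runInf_contOn hcont)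
  have hg0 : g 0 = 0 := by
    rw [hg]
    simp only
    rw [runInf_zero hcont, sub_self]
  have hgs1 : r < g s1 := by
    have h1 : runInf W ω s1 ≤ 0 := runInf_nonpos hcont h0 hs1
    rw [hg]
    simp only
    linarith
  have hIVT := intermediate_value_Icc hs1 (hgcont.mono (Icc_subset_Ici_self))
  have hrmem : r ∈ Icc (g 0) (g s1) := ⟨by rw [hg0]; exact hr.le, hgs1.le⟩
  obtain ⟨x, hx, hgx⟩ := hIVT hrmem
  set A : Set ℝ := {s : ℝ | 0 ≤ s ∧ W s ω - runInf W ω s = r} with hA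
  have hne : A.Nonempty := ⟨x, hx.1, hgx⟩
  have hbdd : BddBelow A := ⟨0, fun y hy => hy.1⟩
  have hclosed : IsClosed A := by
    have h1 : A = Ici 0 ∩ g ⁻¹' {r} := by
      ext z
      simp [hA, hg, mem_preimage]
    rw [h1]
    exact hgcont.preimage_isClosed_of_isClosed isClosed_Ici isClosed_singleton
  have hmem := hclosed.csInf_mem hne hbdd
  exact ⟨hmem.1, hmem.2⟩

/-- `β_r` is a genuine member of its defining set. -/
lemma beta_mem (hcont : Continuous fun t => W t ω) {r : ℝ} (htau : 0 ≤ tauPlus W r ω) :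
    0 ≤ betaPlus W r ω ∧ W (betaPlus W r ω) ω = runInf W ω (tauPlus W r ω)
      ∧ betaPlus W r ω ≤ tauPlus W r ω := by
  set τ := tauPlus W r ω with hτ
  set B : Set ℝ := {s : ℝ | 0 ≤ s ∧ W s ω = runInf W ω τ} with hB
  obtain ⟨s, hs, hseq⟩ := runInf_attained hcont htau
  have hne : B.Nonempty := ⟨s, hs.1, hseq⟩
  have hbdd : BddBelow B := ⟨0, fun y hy => hy.1⟩
  have hclosed : IsClosed B := by
    have h1 : B = Ici 0 ∩ (fun u => W u ω) ⁻¹' {runInf W ω τ} := by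
      ext z
      simp [hB, mem_preimage]
    rw [h1]
    exact isClosed_Ici.inter (isClosed_singleton.preimage hcont)
  have hmem := hclosed.csInf_mem hne hbdd
  refine ⟨hmem.1, hmem.2, ?_⟩
  exact le_trans (csInf_le hbdd ⟨hs.1, hseq⟩) hs.2

/-- Main deterministic implication: the three good path events force `t < β_r`. -/
lemma det_main (hcont : Continuous fun t => W t ω) (h0 : W 0 ω = 0)
    {r t T h v R : ℝ} (ht : 0 ≤ t) (htT : t ≤ T) (hh : 0 < h) (hr : 0 < r)
    (hRr : R ≤ r) (hv : 0 ≤ v)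
    (h1 : ∀ s ∈ Icc 0 T, -h < W s ω)
    (h2 : ∀ s ∈ Icc 0 v, W s ω < R - h)
    (h3 : ∃ s ∈ Icc 0 v, W s ω ≤ -h)
    (h4 : ∃ s, 0 ≤ s ∧ r < W s ω) :
    t < betaPlus W r ω := by
  obtain ⟨hτ0, hτeq⟩ := tau_mem hcont h0 hr h4
  set τ := tauPlus W r ω with hτdef
  set M := runInf W ω τ with hM
  have hMh : M ≤ -h := by
    by_contra hMc
    push_neg at hMc
    have hWτ : R - h < W τ ω := by
      have : W τ ω = M + r := by linarith [hτeq]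
      rw [this]
      linarith
    have hτv : v < τ := by
      by_contra hτv
      push_neg at hτv
      exact absurd (h2 τ ⟨hτ0, hτv⟩) (not_lt.mpr hWτ.le)
    obtain ⟨s, hs, hsle⟩ := h3
    have hsτ : s ∈ Icc 0 τ := ⟨hs.1, le_of_lt (lt_of_le_of_lt hs.2 hτv)⟩
    have : M ≤ W s ω := runInf_le hcont hτ0 hsτ
    linarith
  obtain ⟨hβ0, hβeq, hβτ⟩ := beta_mem hcont hτ0
  by_contra hβt
  push_neg at hβt
  have hβT : betaPlus W r ω ∈ Icc 0 T := ⟨hβ0, hβt.trans htT⟩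
  have := h1 _ hβT
  rw [hβeq] at this
  linarith

end Det

section Numeric
open Real

/-- Time horizon `T n = e^{2n+2}/n⁴`. -/
def Tn (n : ℕ) : ℝ := Real.exp (2*(n:ℝ)+2) / (n:ℝ)^4

/-- Depth `h n = √(16 T n log (n+2))`. -/
def hn (n : ℕ) : ℝ := Real.sqrt (16 * Tn n * Real.log ((n:ℝ)+2))

/-- Waiting horizon `v n = h n² n³`. -/
def vn (n : ℕ) : ℝ := (hn n)^2 * (n:ℝ)^3

variable {n : ℕ}

lemma num_n_pos (hn40 : 2^10 ≤ n) : (0:ℝ) < (n:ℝ) := by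
  have : (0:ℕ) < n := by omega
  exact_mod_cast this

lemma numL (hn40 : 2^10 ≤ n) : (1:ℝ) ≤ Real.log ((n:ℝ)+2) := by
  have hpos : (0:ℝ) < (n:ℝ)+2 := by positivity
  rw [Real.le_log_iff_exp_le hpos]
  have h1 : Real.exp 1 < 2.7182818286 := Real.exp_one_lt_d9
  have h2 : (1024:ℝ) ≤ (n:ℝ) := by exact_mod_cast hn40
  linarith

lemma numT (hn40 : 2^10 ≤ n) : 0 < Tn n := by
  have := num_n_pos hn40
  rw [Tn]
  positivity

lemma numh2 (hn40 : 2^10 ≤ n) : (hn n)^2 = 16 * Tn n * Real.log ((n:ℝ)+2) := by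
  rw [hn, Real.sq_sqrt]
  have h1 := numT hn40
  have h2 := numL hn40
  positivity

lemma numh (hn40 : 2^10 ≤ n) : 0 < hn n := by
  rw [hn]
  apply Real.sqrt_pos.mpr
  have h1 := numT hn40
  have h2 := numL hn40
  positivity

lemma numv (hn40 : 2^10 ≤ n) : 0 < vn n := by
  have h1 := numh hn40
  have h2 := num_n_pos hn40
  rw [vn]
  positivity

lemma numv_eq (hn40 : 2^10 ≤ n) :
    vn n = 16 * Real.exp (2*(n:ℝ)+2) * Real.log ((n:ℝ)+2) / (n:ℝ) := by
  have h2 := num_n_pos hn40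
  rw [vn, numh2 hn40, Tn]
  field_simp

lemma log_le_four_rpow {x : ℝ} (hx : 1 ≤ x) : Real.log x ≤ 4 * x^((1:ℝ)/4) := by
  have hx0 : (0:ℝ) < x := by linarith
  have h1 : Real.log x = 4 * Real.log (x^((1:ℝ)/4)) := by
    rw [Real.log_rpow hx0]; ring
  have h2 : Real.log (x^((1:ℝ)/4)) ≤ x^((1:ℝ)/4) - 1 :=
    Real.log_le_sub_one_of_pos (Real.rpow_pos_of_pos hx0 _)
  rw [h1]
  linarith

lemma exp_two_le : Real.exp 2 ≤ 8 := by
  have h1 : Real.exp 1 < 2.7182818286 := Real.exp_one_lt_d9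
  have h2 : Real.exp 2 = Real.exp 1 * Real.exp 1 := by rw [← Real.exp_add]; norm_num
  nlinarith [Real.exp_pos 1]

lemma exp_sq {y : ℝ} : Real.exp y ^ 2 = Real.exp (2*y) := by
  rw [sq, ← Real.exp_add]; ring_nf

lemma numq2 (hbig : 2^40 ≤ n) : hn n ≤ Real.exp (n:ℝ) / 2 := by
  have h10 : 2^10 ≤ n := by omega
  have hx := num_n_pos h10
  have hL1 := numL h10
  have hL : Real.log ((n:ℝ)+2) ≤ (n:ℝ)+2 := by
    have := Real.log_le_sub_one_of_pos (show (0:ℝ) < (n:ℝ)+2 by positivity)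
    linarith
  set L := Real.log ((n:ℝ)+2) with hLdef
  have hsq : 16 * Tn n * L ≤ (Real.exp (n:ℝ)/2)^2 := by
    rw [Tn]
    have hnn : (1024:ℝ) ≤ (n:ℝ) := by exact_mod_cast h10
    have hn4 : 512 * ((n:ℝ)+2) ≤ (n:ℝ)^4 := by
      have ha1 : 1024*(n:ℝ) ≤ (n:ℝ)^2 := by nlinarith
      have ha2 : (n:ℝ)^2 ≤ (n:ℝ)^4 := by nlinarith [sq_nonneg ((n:ℝ)^2 - 1), sq_nonneg (n:ℝ)]
      linarith
    have key : 64 * (Real.exp 2 * L) ≤ (n:ℝ)^4 := by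
      have s1 : 64 * (Real.exp 2 * L) ≤ 64 * (8 * L) := by
        have := exp_two_le
        nlinarith
      have s2 : (64:ℝ) * (8 * L) ≤ 512 * ((n:ℝ)+2) := by nlinarith
      linarith
    have hsplit : Real.exp (2*(n:ℝ)+2) = Real.exp ((n:ℝ))^2 * Real.exp 2 := by
      rw [exp_sq, ← Real.exp_add]
    rw [hsplit]
    have h9 : 16 * (Real.exp ((n:ℝ))^2 * Real.exp 2 / (n:ℝ)^4) * L
        = (16 * (Real.exp ((n:ℝ))^2 * Real.exp 2) * L)/(n:ℝ)^4 := by ring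
    rw [h9, div_le_iff₀ (by positivity)]
    have hE : (0:ℝ) < Real.exp ((n:ℝ))^2 := by positivity
    have final := mul_le_mul_of_nonneg_left key (le_of_lt (by positivity : (0:ℝ) < Real.exp ((n:ℝ))^2 / 4))
    calc 16 * (Real.exp ((n:ℝ))^2 * Real.exp 2) * L
        = (Real.exp ((n:ℝ))^2/4) * (64 * (Real.exp 2 * L)) := by ring
      _ ≤ (Real.exp ((n:ℝ))^2/4) * (n:ℝ)^4 := final
      _ = (Real.exp (n:ℝ)/2)^2 * (n:ℝ)^4 := by ring
  rw [hn, ← hLdef]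
  calc Real.sqrt (16 * Tn n * L) ≤ Real.sqrt ((Real.exp (n:ℝ)/2)^2) := Real.sqrt_le_sqrt hsq
    _ = Real.exp (n:ℝ)/2 := Real.sqrt_sq (by positivity)

lemma num_sqrt_le (hbig : 2^40 ≤ n) : Real.sqrt ((n:ℝ)+2) ≤ (n:ℝ)/131072 := by
  have hx : (0:ℝ) < (n:ℝ) := num_n_pos (by omega)
  have hnn : ((2:ℝ)^40) ≤ (n:ℝ) := by exact_mod_cast hbig
  have h1 : (n:ℝ)+2 ≤ ((n:ℝ)/131072)^2 := by nlinarith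
  calc Real.sqrt ((n:ℝ)+2) ≤ Real.sqrt (((n:ℝ)/131072)^2) := Real.sqrt_le_sqrt h1
    _ = (n:ℝ)/131072 := Real.sqrt_sq (by positivity)

lemma numL2 (hbig : 2^40 ≤ n) : 1024 * Real.exp 2 * (Real.log ((n:ℝ)+2))^2 ≤ (n:ℝ) := by
  have hx : (0:ℝ) < (n:ℝ) := num_n_pos (by omega)
  have hL1 := numL (show 2^10 ≤ n by omega)
  set L := Real.log ((n:ℝ)+2) with hLdef
  have hy : (0:ℝ) ≤ ((n:ℝ)+2)^((1:ℝ)/4) := le_of_lt (Real.rpow_pos_of_pos (by positivity) _)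
  have h1 : L ≤ 4 * ((n:ℝ)+2)^((1:ℝ)/4) := log_le_four_rpow (by linarith)
  have h2 : L^2 ≤ 16 * (((n:ℝ)+2)^((1:ℝ)/4))^2 := by nlinarith
  have h3 : (((n:ℝ)+2)^((1:ℝ)/4))^2 = Real.sqrt ((n:ℝ)+2) := by
    rw [← Real.rpow_natCast (((n:ℝ)+2)^((1:ℝ)/4)) 2, ← Real.rpow_mul (by positivity)]
    rw [Real.sqrt_eq_rpow]
    norm_num
  rw [h3] at h2
  have h4 := num_sqrt_le hbig
  have h5 : L^2 ≤ 16 * ((n:ℝ)/131072) := by nlinarith [Real.sqrt_nonneg ((n:ℝ)+2)]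
  have he := exp_two_le
  have hL0 : (0:ℝ) ≤ L := by linarith
  nlinarith

lemma numq3 (hbig : 2^40 ≤ n) :
    2 * Real.log ((n:ℝ)+2) ≤ (Real.exp (n:ℝ) - hn n)^2/(8 * vn n) := by
  have h10 : 2^10 ≤ n := by omega
  have hx := num_n_pos h10
  have hL1 := numL h10
  have hv := numv h10
  have hh := numh h10
  have hq2 := numq2 hbig
  set L := Real.log ((n:ℝ)+2) with hLdef
  have hc : Real.exp (n:ℝ)/2 ≤ Real.exp (n:ℝ) - hn n := by linarith
  have hc2 : (Real.exp (n:ℝ)/2)^2 ≤ (Real.exp (n:ℝ) - hn n)^2 := by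
    have h0 : (0:ℝ) ≤ Real.exp (n:ℝ)/2 := by positivity
    nlinarith
  rw [le_div_iff₀ (by positivity)]
  have hveq := numv_eq h10
  rw [← hLdef] at hveq
  have hsplit : Real.exp (2*(n:ℝ)+2) = Real.exp ((n:ℝ))^2 * Real.exp 2 := by
    rw [exp_sq, ← Real.exp_add]
  have key := numL2 hbig
  rw [← hLdef] at key
  have hE : (0:ℝ) < Real.exp ((n:ℝ))^2 := by positivity
  have step : 2 * L * (8 * vn n) ≤ (Real.exp (n:ℝ)/2)^2 := by
    have h9 : 2 * L * (8 * vn n)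
        = (256 * (Real.exp ((n:ℝ))^2 * Real.exp 2) * L^2)/(n:ℝ) := by
      rw [hveq, hsplit]; ring
    rw [h9, div_le_iff₀ hx]
    have final := mul_le_mul_of_nonneg_left key
      (le_of_lt (by positivity : (0:ℝ) < Real.exp ((n:ℝ))^2 / 4))
    calc 256 * (Real.exp ((n:ℝ))^2 * Real.exp 2) * L^2
        = (Real.exp ((n:ℝ))^2/4) * (1024 * Real.exp 2 * L^2) := by ring
      _ ≤ (Real.exp ((n:ℝ))^2/4) * (n:ℝ) := final
      _ = (Real.exp (n:ℝ)/2)^2 * (n:ℝ) := by ring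
  calc 2 * L * (8 * vn n) ≤ (Real.exp (n:ℝ)/2)^2 := step
    _ ≤ (Real.exp (n:ℝ) - hn n)^2 := hc2

lemma numq4 (hbig : 2^40 ≤ n) :
    7 * hn n / Real.sqrt (2*Real.pi*(vn n)) ≤ 3/Real.sqrt ((n:ℝ)^3) := by
  have h10 : 2^10 ≤ n := by omega
  have hx := num_n_pos h10
  have hh := numh h10
  have hN : (0:ℝ) < (n:ℝ)^3 := by positivity
  have hsqrtN : (0:ℝ) < Real.sqrt ((n:ℝ)^3) := Real.sqrt_pos.mpr hN
  have h2pi : (0:ℝ) < 2*Real.pi := by positivity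
  have hsv : Real.sqrt (2*Real.pi*(vn n))
      = Real.sqrt (2*Real.pi) * (hn n * Real.sqrt ((n:ℝ)^3)) := by
    rw [vn, Real.sqrt_mul h2pi.le, Real.sqrt_mul (sq_nonneg _), Real.sqrt_sq hh.le]
  have hsp : (7:ℝ)/3 ≤ Real.sqrt (2*Real.pi) := by
    rw [show (7:ℝ)/3 = Real.sqrt ((7/3)^2) from (Real.sqrt_sq (by norm_num)).symm]
    apply Real.sqrt_le_sqrt
    nlinarith [Real.pi_gt_three]
  rw [hsv, div_le_div_iff₀ (by positivity) hsqrtN]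
  have hs0 : (0:ℝ) ≤ Real.sqrt (2*Real.pi) := Real.sqrt_nonneg _
  nlinarith [mul_pos hh hsqrtN]

lemma numE1exp (hbig : 2^10 ≤ n) :
    -(hn n)^2/(8*Tn n) = -(2*Real.log ((n:ℝ)+2)) := by
  have hT := numT hbig
  rw [numh2 hbig]
  field_simp
  ring

lemma exp_neg_two_log {x : ℝ} (hx : 0 < x) :
    Real.exp (-(2*Real.log x)) = (x^2)⁻¹ := by
  rw [Real.exp_neg]
  congr 1
  rw [two_mul, Real.exp_add, Real.exp_log hx, sq]

end Numeric


section Events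

variable {Ω : Type*} [MeasurableSpace Ω] {P : Measure Ω} {W : ℝ → Ω → ℝ}

def E1set (W : ℝ → Ω → ℝ) (n : ℕ) : Set Ω := {ω | ∃ s ∈ Icc 0 (Tn n), W s ω ≤ -(hn n)}

def E2set (W : ℝ → Ω → ℝ) (n : ℕ) : Set Ω :=
  {ω | ∃ s ∈ Icc 0 (vn n), Real.exp (n:ℝ) - hn n ≤ W s ω}

def E3set (W : ℝ → Ω → ℝ) (n : ℕ) : Set Ω := {ω | ∀ s ∈ Icc 0 (vn n), -(hn n) < W s ω}

def badSet (W : ℝ → Ω → ℝ) (n : ℕ) : Set Ω := E1set W n ∪ E2set W n ∪ E3set W n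

lemma bound_E1 (hW : IsBrownianMotion P W) {n : ℕ} (h10 : 2^10 ≤ n) :
    P (E1set W n) ≤ ENNReal.ofReal (2 * ((((n:ℝ)+2)^2)⁻¹)) := by
  have h := tool_A hW (numT h10) (numh h10)
  rw [E1set]
  refine h.trans (ENNReal.ofReal_le_ofReal ?_)
  rw [numE1exp h10, exp_neg_two_log (by positivity)]

lemma bound_E2 (hW : IsBrownianMotion P W) {n : ℕ} (hbig : 2^40 ≤ n) :
    P (E2set W n) ≤ ENNReal.ofReal (2 * ((((n:ℝ)+2)^2)⁻¹)) := by
  have h10 : 2^10 ≤ n := by omega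
  have hc : 0 < Real.exp (n:ℝ) - hn n := by
    have := numq2 hbig
    have := Real.exp_pos (n:ℝ)
    linarith
  have h := tool_A' hW (numv h10) hc
  rw [E2set]
  refine h.trans (ENNReal.ofReal_le_ofReal ?_)
  have h2 : Real.exp (-(Real.exp (n:ℝ) - hn n)^2/(8*vn n))
      ≤ Real.exp (-(2*Real.log ((n:ℝ)+2))) := by
    apply Real.exp_le_exp.mpr
    have := numq3 hbig
    rw [neg_div]
    linarith
  rw [exp_neg_two_log (by positivity)] at h2
  nlinarith [Real.exp_pos (-(Real.exp (n:ℝ) - hn n)^2/(8*vn n))]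

lemma bound_E3 (hW : IsBrownianMotion P W) {n : ℕ} (hbig : 2^40 ≤ n) :
    P (E3set W n) ≤ ENNReal.ofReal (3/Real.sqrt ((n:ℝ)^3)) := by
  have h10 : 2^10 ≤ n := by omega
  have h := tool_B hW (numv h10) (numh h10)
  rw [E3set]
  refine h.trans (ENNReal.ofReal_le_ofReal ?_)
  exact numq4 hbig

def boundFn (n : ℕ) : ℝ := 4 * ((((n:ℝ)+2)^2)⁻¹) + 3/Real.sqrt ((n:ℝ)^3)

lemma boundFn_nonneg (n : ℕ) : 0 ≤ boundFn n := by
  rw [boundFn]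
  positivity

lemma bound_bad (hW : IsBrownianMotion P W) {n : ℕ} (hbig : 2^40 ≤ n) :
    P (badSet W n) ≤ ENNReal.ofReal (boundFn n) := by
  have h10 : 2^10 ≤ n := by omega
  rw [badSet, boundFn]
  calc P (E1set W n ∪ E2set W n ∪ E3set W n)
      ≤ P (E1set W n ∪ E2set W n) + P (E3set W n) := measure_union_le _ _
    _ ≤ (P (E1set W n) + P (E2set W n)) + P (E3set W n) :=
        add_le_add_left (measure_union_le _ _) _
    _ ≤ (ENNReal.ofReal (2 * ((((n:ℝ)+2)^2)⁻¹)) + ENNReal.ofReal (2 * ((((n:ℝ)+2)^2)⁻¹)))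
        + ENNReal.ofReal (3/Real.sqrt ((n:ℝ)^3)) :=
        add_le_add (add_le_add (bound_E1 hW h10) (bound_E2 hW hbig)) (bound_E3 hW hbig)
    _ = ENNReal.ofReal (4 * ((((n:ℝ)+2)^2)⁻¹) + 3/Real.sqrt ((n:ℝ)^3)) := by
        rw [← ENNReal.ofReal_add (by positivity) (by positivity),
          ← ENNReal.ofReal_add (by positivity) (by positivity)]
        congr 1
        ring

lemma summable_boundFn : Summable boundFn := by
  apply Summable.add
  · have h1 : Summable (fun n : ℕ => ((n:ℝ)^2)⁻¹) := by
      have := Real.summable_one_div_nat_pow.mpr (le_refl 2)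
      simpa [one_div] using this
    have h2 : Summable (fun n : ℕ => ((((n+2:ℕ)):ℝ)^2)⁻¹) := (summable_nat_add_iff 2).mpr h1
    have h3 : (fun n : ℕ => 4 * ((((n:ℝ)+2)^2)⁻¹))
        = fun n : ℕ => 4 * ((((n+2:ℕ)):ℝ)^2)⁻¹ := by
      funext n
      push_cast
      ring
    rw [h3]
    exact h2.mul_left 4
  · have h2 : Summable (fun n : ℕ => 1/(n:ℝ)^((3:ℝ)/2)) :=
      Real.summable_one_div_nat_rpow.mpr (by norm_num)
    have h3 : (fun n : ℕ => 3/Real.sqrt ((n:ℝ)^3))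
        = fun n : ℕ => 3 * (1/(n:ℝ)^((3:ℝ)/2)) := by
      funext n
      rw [Real.sqrt_eq_rpow, ← Real.rpow_natCast (n:ℝ) 3, ← Real.rpow_mul (Nat.cast_nonneg n)]
      norm_num
      ring
    rw [h3]
    exact h2.mul_left 3

lemma sum_bad_ne_top (hW : IsBrownianMotion P W) :
    (∑' m : ℕ, P (badSet W (m + 2^40))) ≠ ∞ := by
  have hb : ∀ m : ℕ, P (badSet W (m + 2^40)) ≤ ENNReal.ofReal (boundFn (m + 2^40)) :=
    fun m => bound_bad hW (by omega)
  have hsum : Summable (fun m : ℕ => boundFn (m + 2^40)) :=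
    (summable_nat_add_iff (2^40)).mpr summable_boundFn
  have h1 : (∑' m : ℕ, P (badSet W (m + 2^40)))
      ≤ ENNReal.ofReal (∑' m, boundFn (m + 2^40)) := by
    rw [ENNReal.ofReal_tsum_of_nonneg (fun m => boundFn_nonneg _) hsum]
    exact ENNReal.tsum_le_tsum hb
  exact ne_top_of_le_ne_top ENNReal.ofReal_ne_top h1

lemma sup_unbounded (hW : IsBrownianMotion P W) :
    ∀ᵐ ω ∂P, ∀ K : ℕ, ∃ s, 0 ≤ s ∧ (K:ℝ) < W s ω := by
  haveI := hW.isProb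
  rw [MeasureTheory.ae_iff]
  have h1 : {ω | ¬ ∀ K : ℕ, ∃ s, 0 ≤ s ∧ (K:ℝ) < W s ω}
      ⊆ ⋃ K : ℕ, {ω | ∀ s, 0 ≤ s → W s ω ≤ K} := by
    intro ω hω
    simp only [mem_setOf_eq] at hω
    push_neg at hω
    obtain ⟨K, hK⟩ := hω
    exact mem_iUnion.mpr ⟨K, hK⟩
  refine measure_mono_null h1 (measure_iUnion_null fun K => ?_)
  refine le_antisymm ?_ zero_le
  have h2 : ∀ T : ℕ, 0 < T →
      P {ω | ∀ s, 0 ≤ s → W s ω ≤ K}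
        ≤ ENNReal.ofReal (7*((K:ℝ)+1)/Real.sqrt (2*Real.pi*(T:ℝ))) := by
    intro T hT
    have hTpos : (0:ℝ) < (T:ℝ) := by exact_mod_cast hT
    have h3 := tool_B' hW hTpos (show (0:ℝ) < (K:ℝ)+1 by positivity)
    refine (measure_mono ?_).trans h3
    intro ω hω s hs
    exact lt_of_le_of_lt (hω s hs.1) (by linarith)
  refine ENNReal.le_of_forall_pos_le_add ?_
  intro ε hε _
  rw [zero_add]
  have hεpos : (0:ℝ) < (ε:ℝ) := hε
  set x : ℝ := 7*((K:ℝ)+1)/(ε:ℝ) with hx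
  have hxpos : 0 < x := by positivity
  set T : ℕ := ⌈x^2⌉₊ + 1 with hT
  have hTpos : 0 < T := by omega
  have hTx : x^2 ≤ (T:ℝ) := by
    calc x^2 ≤ (⌈x^2⌉₊ : ℝ) := Nat.le_ceil _
      _ ≤ (T:ℝ) := by rw [hT]; push_cast; linarith
  refine (h2 T hTpos).trans ?_
  have h4 : 7*((K:ℝ)+1)/Real.sqrt (2*Real.pi*(T:ℝ)) ≤ (ε:ℝ) := by
    have h5 : x ≤ Real.sqrt (2*Real.pi*(T:ℝ)) := by
      have h6 : x = Real.sqrt (x^2) := (Real.sqrt_sq hxpos.le).symm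
      rw [h6]
      apply Real.sqrt_le_sqrt
      nlinarith [Real.pi_gt_three, hTx, sq_nonneg x]
    have h7 : 0 < Real.sqrt (2*Real.pi*(T:ℝ)) := lt_of_lt_of_le hxpos h5
    rw [div_le_iff₀ h7]
    calc 7*((K:ℝ)+1) = x * (ε:ℝ) := by rw [hx]; field_simp
      _ ≤ Real.sqrt (2*Real.pi*(T:ℝ)) * (ε:ℝ) := by
          exact mul_le_mul_of_nonneg_right h5 hεpos.le
      _ = (ε:ℝ) * Real.sqrt (2*Real.pi*(T:ℝ)) := mul_comm _ _
  calc ENNReal.ofReal (7*((K:ℝ)+1)/Real.sqrt (2*Real.pi*(T:ℝ)))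
      ≤ ENNReal.ofReal (ε:ℝ) := ENNReal.ofReal_le_ofReal h4
    _ = (ε : ℝ≥0∞) := ENNReal.ofReal_coe_nnreal

theorem main_thm (hW : IsBrownianMotion P W) :
    ∀ᵐ ω ∂P, ∃ r₀ : ℝ, ∀ r : ℝ, r₀ ≤ r →
      r ^ 2 / Real.log r ^ 4 < betaPlus W r ω := by
  haveI := hW.isProb
  have hBC := MeasureTheory.ae_eventually_notMem (sum_bad_ne_top hW)
  have hsup := sup_unbounded hW
  filter_upwards [hBC, hsup] with ω hω1 hω2
  rw [Filter.eventually_atTop] at hω1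
  obtain ⟨M, hM⟩ := hω1
  set N : ℕ := M + 2^40 with hN
  refine ⟨Real.exp ((N:ℝ)+1), ?_⟩
  intro r hr
  have hrpos : 0 < r := lt_of_lt_of_le (Real.exp_pos _) hr
  have hlogr : (N:ℝ)+1 ≤ Real.log r := by
    rw [Real.le_log_iff_exp_le hrpos]
    exact hr
  have hlogpos : (0:ℝ) < Real.log r := by
    have : (0:ℝ) ≤ (N:ℝ) := Nat.cast_nonneg N
    linarith
  set n : ℕ := ⌊Real.log r⌋₊ with hndef
  have hnN : N + 1 ≤ n := by
    rw [hndef]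
    apply Nat.le_floor
    push_cast
    linarith
  have hbig : 2^40 ≤ n := by omega
  have h10 : 2^10 ≤ n := by omega
  have hexp_le : Real.exp (n:ℝ) ≤ r := by
    have h1 : (n:ℝ) ≤ Real.log r := Nat.floor_le hlogpos.le
    calc Real.exp (n:ℝ) ≤ Real.exp (Real.log r) := Real.exp_le_exp.mpr h1
      _ = r := Real.exp_log hrpos
  have hr_lt : r ≤ Real.exp ((n:ℝ)+1) := by
    have h1 : Real.log r < (n:ℝ)+1 := by
      have h2 := Nat.lt_floor_add_one (Real.log r)
      rw [← hndef] at h2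
      exact_mod_cast h2
    calc r = Real.exp (Real.log r) := (Real.exp_log hrpos).symm
      _ ≤ Real.exp ((n:ℝ)+1) := Real.exp_le_exp.mpr h1.le
  have hnb : ω ∉ badSet W n := by
    have h5 := hM (n - 2^40) (by omega)
    rwa [show n - 2^40 + 2^40 = n by omega] at h5
  have hnE1 : ω ∉ E1set W n := fun h => hnb (Or.inl (Or.inl h))
  have hnE2 : ω ∉ E2set W n := fun h => hnb (Or.inl (Or.inr h))
  have hnE3 : ω ∉ E3set W n := fun h => hnb (Or.inr h)
  have h1 : ∀ s ∈ Icc 0 (Tn n), -(hn n) < W s ω := by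
    intro s hs
    by_contra hcon
    push_neg at hcon
    exact hnE1 ⟨s, hs, hcon⟩
  have h2 : ∀ s ∈ Icc 0 (vn n), W s ω < Real.exp (n:ℝ) - hn n := by
    intro s hs
    by_contra hcon
    push_neg at hcon
    exact hnE2 ⟨s, hs, hcon⟩
  have h3 : ∃ s ∈ Icc 0 (vn n), W s ω ≤ -(hn n) := by
    simp only [E3set, mem_setOf_eq] at hnE3
    push_neg at hnE3
    exact hnE3
  have h4 : ∃ s, 0 ≤ s ∧ r < W s ω := by
    obtain ⟨s, hs0, hsr⟩ := hω2 ⌈r⌉₊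
    exact ⟨s, hs0, lt_of_le_of_lt (Nat.le_ceil r) hsr⟩
  have ht : (0:ℝ) ≤ r^2/Real.log r^4 := by positivity
  have htT : r^2/Real.log r^4 ≤ Tn n := by
    rw [Tn]
    have hnum : r^2 ≤ Real.exp (2*(n:ℝ)+2) := by
      have h5 : Real.exp ((n:ℝ)+1)^2 = Real.exp (2*(n:ℝ)+2) := by
        rw [exp_sq]; ring_nf
      rw [← h5]; exact pow_le_pow_left₀ hrpos.le hr_lt 2
    have hden : (n:ℝ)^4 ≤ Real.log r^4 := by
      have h6 : (n:ℝ) ≤ Real.log r := Nat.floor_le hlogpos.le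
      exact pow_le_pow_left₀ (Nat.cast_nonneg n) h6 4
    have hd0 : (0:ℝ) < (n:ℝ)^4 := by
      have := num_n_pos h10
      positivity
    exact div_le_div₀ (Real.exp_pos _).le hnum hd0 hden
  exact det_main (hW.cont ω) (hW.init ω) ht htT (numh h10) hrpos hexp_le
    (numv h10).le h1 h2 h3 h4

end Events

end BMaux

/-- The almost-sure lower bound at the end of the proof of Lemma 3.12
(intervlemma): with probability one, `β_r⁺ > r²/(log r)⁴` for all sufficiently
large `r`. -/
theorem favorite_points_betaPlus_growth
    {Ω : Type*} [MeasurableSpace Ω] (P : Measure Ω) (W : ℝ → Ω → ℝ)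
    (hW : IsBrownianMotion P W) :
    ∀ᵐ ω ∂P, ∃ r₀ : ℝ, ∀ r : ℝ, r₀ ≤ r →
      r ^ 2 / Real.log r ^ 4 < betaPlus W r ω := by
  exact BMaux.main_thm hW

end
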